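/- arXiv:2505.05425 — 9 statements merged into one kernel-verified Lean document; each statement's English description precedes it below -/
import Mathlib

section
/- Let B be a differentiation basis in a metric measure space 𝕏 = (X, ρ, μ), and define diff(B) := {p ∈ [1,∞] : B differentiates L^p(𝕏)}. If 𝕏 is complete, then there exists p₀ ∈ [1,∞) such that diff(B) equals one of the following six sets: ∅, {∞}, [p₀,∞], (p₀,∞], [p₀,∞), (p₀,∞). -/
open MeasureTheory Filter Metric Topology ENNReal

section Framework

variable {X : Type*} [MetricSpace X] [MeasurableSpace X] (μ : MeasureTheory.Measure X)

/-- A sequence of sets `S : ℕ → Set X` *contracts to* `x` with respect to the family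
assignment `Bx`: every `S n` belongs to `Bx x` and `S n ⊆ B(x, r n)` for some radii
`r n → 0`. -/
def ContractsTo (Bx : X → Set (Set X)) (x : X) (S : ℕ → Set X) : Prop :=
  (∀ n, S n ∈ Bx x) ∧
  ∃ r : ℕ → ℝ, Tendsto r atTop (𝓝 0) ∧ ∀ n, S n ⊆ Metric.ball x (r n)

/-- A differentiation basis in a metric measure space: for every `x`, a family `sets x` of
measurable sets containing `x` with finite positive measure, such that almost every point
admits a sequence contracting to it. -/
structure DiffBasis where
  sets : X → Set (Set X)
  measurableSet' : ∀ x, ∀ S ∈ sets x, MeasurableSet S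
  mem_of_mem : ∀ x, ∀ S ∈ sets x, x ∈ S
  measure_pos : ∀ x, ∀ S ∈ sets x, 0 < μ S
  measure_lt_top : ∀ x, ∀ S ∈ sets x, μ S < ⊤
  ae_contracts : ∀ᵐ x ∂μ, ∃ S : ℕ → Set X, ContractsTo sets x S

namespace DiffBasis

variable {μ}

/-- The whole family `B = ⋃ₓ B(x)`. -/
def family (B : DiffBasis μ) : Set (Set X) := ⋃ x, B.sets x

/-- `B` is uncentered if `B(x) = {S ∈ B : x ∈ S}` for every `x`. -/
def Uncentered (B : DiffBasis μ) : Prop :=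
  ∀ x, B.sets x = {S | S ∈ B.family ∧ x ∈ S}

/-- A Busemann–Feller basis: an uncentered basis all of whose members are open. -/
def BusemannFeller (B : DiffBasis μ) : Prop :=
  B.Uncentered ∧ ∀ S ∈ B.family, IsOpen S

/-- `B` differentiates `L^p(𝕏)`: for every `f ∈ L^p`, for almost every `x`, the averages of
`f` along any sequence contracting to `x` converge to `f x`. -/
def Differentiates (B : DiffBasis μ) (p : ℝ≥0∞) : Prop :=
  ∀ f : X → ℝ, MemLp f p μ →
    ∀ᵐ x ∂μ, ∀ S : ℕ → Set X, ContractsTo B.sets x S →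
      Tendsto (fun n => ⨍ y in S n, f y ∂μ) atTop (𝓝 (f x))

/-- `diff(B) = {p ∈ [1,∞] : B differentiates L^p}`. -/
def diffSet (B : DiffBasis μ) : Set ℝ≥0∞ := {p : ℝ≥0∞ | 1 ≤ p ∧ B.Differentiates p}

end DiffBasis

end Framework

section AuxProofs

variable {X : Type*} [MetricSpace X] [MeasurableSpace X] {μ : Measure X}

/-- A function in `L^q`, `1 ≤ q`, is integrable on every measurable set of finite measure. -/
lemma integrableOn_of_memLp {f : X → ℝ} {q : ℝ≥0∞} (hf : MemLp f q μ) (h1 : 1 ≤ q)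
    {S : Set X} (hfin : μ S < ⊤) : IntegrableOn f S μ := by
  haveI : Fact (μ S < ⊤) := ⟨hfin⟩
  exact memLp_one_iff_integrable.mp ((hf.restrict S).mono_exponent h1)

/-- The truncation of an `L^q` function above level `lam > 0` lies in `L^p` for `1 ≤ p ≤ q < ∞`. -/
lemma memLp_trunc {f : X → ℝ} {p q : ℝ≥0∞} (hf : MemLp f q μ)
    (hsm : StronglyMeasurable f)
    (h1p : 1 ≤ p) (hq : q ≠ ⊤) (hpq : p ≤ q) {lam : ℝ} (hlam : 0 < lam) :
    MemLp (fun y => if lam < |f y| then f y else 0) p μ := by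
  have hp : p ≠ ⊤ := fun h => hq (top_le_iff.mp (h ▸ hpq))
  have hp0 : p ≠ 0 := fun h => by simp [h] at h1p
  have hq0 : q ≠ 0 := fun h => hp0 (le_antisymm (h ▸ hpq) zero_le)
  set pr := p.toReal with hpr
  set qr := q.toReal with hqr
  have hpr0 : 0 < pr := ENNReal.toReal_pos hp0 hp
  have hprqr : pr ≤ qr := ENNReal.toReal_mono hq hpq
  have hmeas : MeasurableSet {y | lam < |f y|} := by
    have : Measurable fun y => |f y| := hsm.measurable.abs
    exact this measurableSet_Ioi
  have hgsm : StronglyMeasurable (fun y => if lam < |f y| then f y else 0) := by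
    have h2 : (fun y => if lam < |f y| then f y else 0) = {y | lam < |f y|}.indicator f := by
      funext y; simp [Set.indicator, Set.mem_setOf_eq]
    rw [h2]; exact hsm.indicator hmeas
  refine ⟨hgsm.aestronglyMeasurable, ?_⟩
  rw [eLpNorm_eq_lintegral_rpow_enorm_toReal hp0 hp]
  refine ENNReal.rpow_lt_top_of_nonneg (by positivity) (ne_of_lt ?_)
  have hfq : (∫⁻ y, (‖f y‖₊ : ℝ≥0∞) ^ qr ∂μ) < ⊤ :=
    lintegral_rpow_enorm_lt_top_of_eLpNorm_lt_top hq0 hq hf.2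
  set C : ℝ≥0∞ := ENNReal.ofReal (lam ^ (pr - qr)) with hC
  have hbound : ∀ y, (‖if lam < |f y| then f y else 0‖₊ : ℝ≥0∞) ^ pr
      ≤ C * (‖f y‖₊ : ℝ≥0∞) ^ qr := by
    intro y
    by_cases h : lam < |f y|
    · simp only [if_pos h]
      have hfy : 0 < |f y| := lt_trans hlam h
      have key : |f y| ^ pr ≤ lam ^ (pr - qr) * |f y| ^ qr := by
        have h1 : |f y| ^ pr = |f y| ^ (pr - qr) * |f y| ^ qr := by
          rw [← Real.rpow_add hfy]; ring_nf
        rw [h1]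
        exact mul_le_mul_of_nonneg_right
          (Real.rpow_le_rpow_of_nonpos hlam h.le (by linarith)) (by positivity)
      calc (‖f y‖₊ : ℝ≥0∞) ^ pr = ENNReal.ofReal (|f y| ^ pr) := by
            rw [← Real.norm_eq_abs, ← enorm_eq_nnnorm, ← ofReal_norm,
              ENNReal.ofReal_rpow_of_nonneg (norm_nonneg _) hpr0.le]
        _ ≤ ENNReal.ofReal (lam ^ (pr - qr) * |f y| ^ qr) := ENNReal.ofReal_le_ofReal key
        _ = C * (‖f y‖₊ : ℝ≥0∞) ^ qr := by
            rw [ENNReal.ofReal_mul (by positivity), hC, ← Real.norm_eq_abs,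
              ← enorm_eq_nnnorm, ← ofReal_norm,
              ENNReal.ofReal_rpow_of_nonneg (norm_nonneg _) (by positivity)]
    · simp only [if_neg h, nnnorm_zero, ENNReal.coe_zero,
        ENNReal.zero_rpow_of_pos hpr0]
      exact zero_le
  calc (∫⁻ y, (‖if lam < |f y| then f y else 0‖₊ : ℝ≥0∞) ^ pr ∂μ)
      ≤ ∫⁻ y, C * (‖f y‖₊ : ℝ≥0∞) ^ qr ∂μ := lintegral_mono hbound
    _ = C * ∫⁻ y, (‖f y‖₊ : ℝ≥0∞) ^ qr ∂μ := lintegral_const_mul' _ _ ENNReal.ofReal_ne_top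
    _ < ⊤ := ENNReal.mul_lt_top ENNReal.ofReal_lt_top hfq

/-- Monotonicity: if a differentiation basis differentiates `L^p` with `p < ∞`, then it
differentiates `L^q` for every finite `q ≥ p`. -/
lemma DiffBasis.differentiates_mono (B : DiffBasis μ) {p q : ℝ≥0∞}
    (h1p : 1 ≤ p) (hp : p ≠ ⊤) (hq : q ≠ ⊤) (hpq : p ≤ q)
    (hB : B.Differentiates p) : B.Differentiates q := by
  have h1q : 1 ≤ q := le_trans h1p hpq
  -- First prove it for strongly measurable f, then transfer.
  have core : ∀ f : X → ℝ, StronglyMeasurable f → MemLp f q μ →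
      ∀ᵐ x ∂μ, ∀ S : ℕ → Set X, ContractsTo B.sets x S →
        Tendsto (fun n => ⨍ y in S n, f y ∂μ) atTop (𝓝 (f x)) := by
    intro f hsm hf
    set g : ℕ → X → ℝ := fun k y => if 1 / ((k : ℝ) + 1) < |f y| then f y else 0 with hg
    set h : ℕ → X → ℝ := fun k y => if 1 / ((k : ℝ) + 1) < |f y| then 0 else f y with hh
    have hlam : ∀ k : ℕ, (0:ℝ) < 1 / ((k : ℝ) + 1) := fun k => by positivity
    have hgmem : ∀ k, MemLp (g k) p μ := fun k =>
      memLp_trunc hf hsm h1p hq hpq (hlam k)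
    have hgh : ∀ k y, g k y + h k y = f y := by
      intro k y
      by_cases hc : 1 / ((k : ℝ) + 1) < |f y|
      · simp only [hg, hh, if_pos hc, add_zero]
      · simp only [hg, hh, if_neg hc, zero_add]
    have hhle : ∀ k y, |h k y| ≤ 1 / ((k : ℝ) + 1) := by
      intro k y
      by_cases hc : 1 / ((k : ℝ) + 1) < |f y|
      · simp only [hh, if_pos hc, abs_zero]; exact (hlam k).le
      · simp only [hh, if_neg hc]; exact le_of_not_gt hc
    have hae : ∀ᵐ x ∂μ, ∀ k : ℕ, ∀ S : ℕ → Set X, ContractsTo B.sets x S →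
        Tendsto (fun n => ⨍ y in S n, g k y ∂μ) atTop (𝓝 (g k x)) :=
      ae_all_iff.2 fun k => hB (g k) (hgmem k)
    filter_upwards [hae] with x hx S hS
    rw [Metric.tendsto_atTop]
    intro ε hε
    obtain ⟨k, hk⟩ := exists_nat_one_div_lt (show (0:ℝ) < ε / 4 by linarith)
    set lam := 1 / ((k : ℝ) + 1) with hlamdef
    have hklam : lam < ε / 4 := by exact_mod_cast hk
    have hgk := hx k S hS
    rw [Metric.tendsto_atTop] at hgk
    obtain ⟨N, hN⟩ := hgk (ε / 4) (by linarith)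
    refine ⟨N, fun n hn => ?_⟩
    -- basic facts about S n
    have hSn := hS.1 n
    have hSmeas : MeasurableSet (S n) := B.measurableSet' x (S n) hSn
    have hSpos : 0 < μ (S n) := B.measure_pos x (S n) hSn
    have hSfin : μ (S n) < ⊤ := B.measure_lt_top x (S n) hSn
    have hif : IntegrableOn f (S n) μ := integrableOn_of_memLp hf h1q hSfin
    have hig : IntegrableOn (g k) (S n) μ :=
      integrableOn_of_memLp (hgmem k) h1p hSfin
    have hih : IntegrableOn (h k) (S n) μ := by
      have : h k = f - g k := by
        funext y; have := hgh k y; simp [Pi.sub_apply]; linarith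
      rw [this]; exact hif.sub hig
    have hμpos : (0:ℝ) < (μ (S n)).toReal := ENNReal.toReal_pos hSpos.ne' hSfin.ne
    -- the average of f splits
    have hsplit : ⨍ y in S n, f y ∂μ = (⨍ y in S n, g k y ∂μ) + ⨍ y in S n, h k y ∂μ := by
      rw [setAverage_eq, setAverage_eq, setAverage_eq, ← smul_add, ← integral_add hig hih]
      congr 1
      exact integral_congr_ae (Filter.Eventually.of_forall fun y => (hgh k y).symm)
    -- the average of h is small
    have hhsmall : |⨍ y in S n, h k y ∂μ| ≤ lam := by
      rw [setAverage_eq]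
      have hint : ‖∫ y in S n, h k y ∂μ‖ ≤ lam * (μ (S n)).toReal :=
        norm_setIntegral_le_of_norm_le_const hSfin
          (fun y _ => by rw [Real.norm_eq_abs]; exact hhle k y)
      rw [measureReal_def, smul_eq_mul, abs_mul, abs_inv, abs_of_nonneg hμpos.le, Real.norm_eq_abs] at *
      calc ((μ (S n)).toReal)⁻¹ * |∫ y in S n, h k y ∂μ|
          ≤ ((μ (S n)).toReal)⁻¹ * (lam * (μ (S n)).toReal) := by
            apply mul_le_mul_of_nonneg_left hint (by positivity)
        _ = lam := by field_simp
    have hhx : |h k x| ≤ lam := hhle k x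
    have hgx : |g k x - f x| ≤ lam := by
      have := hgh k x
      have : g k x - f x = -h k x := by linarith
      rw [this, abs_neg]; exact hhx
    have hdist := hN n hn
    rw [Real.dist_eq] at hdist ⊢
    have : ⨍ y in S n, f y ∂μ - f x =
        ((⨍ y in S n, g k y ∂μ) - g k x) + (⨍ y in S n, h k y ∂μ) + (g k x - f x) := by
      rw [hsplit]; ring
    rw [this]
    calc |((⨍ y in S n, g k y ∂μ) - g k x) + (⨍ y in S n, h k y ∂μ) + (g k x - f x)|
        ≤ |(⨍ y in S n, g k y ∂μ) - g k x| + |⨍ y in S n, h k y ∂μ| + |g k x - f x| :=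
          (abs_add_le _ _).trans (by gcongr; exact abs_add_le _ _)
      _ < ε / 4 + ε / 4 + ε / 4 := by
          gcongr
          · exact lt_of_le_of_lt hhsmall hklam
          · exact lt_of_le_of_lt hgx hklam
      _ < ε := by linarith
  -- transfer to arbitrary f via a strongly measurable representative
  intro f hf
  set f' := hf.1.mk f with hf'def
  have hff' : f =ᵐ[μ] f' := hf.1.ae_eq_mk
  have hf'sm : StronglyMeasurable f' := hf.1.stronglyMeasurable_mk
  have hf' : MemLp f' q μ := hf.ae_eq hff'
  filter_upwards [core f' hf'sm hf', hff'] with x hx hfx S hS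
  have heq : (fun n => ⨍ y in S n, f y ∂μ) = fun n => ⨍ y in S n, f' y ∂μ :=
    funext fun n => average_congr (ae_restrict_of_ae hff')
  rw [heq, hfx]
  exact hx S hS

end AuxProofs

/-- **Theorem (statement 3).** Let `B` be a differentiation basis in a metric measure space
`𝕏 = (X, ρ, μ)`. If `𝕏` is complete, then `diff(B)` takes one of the six forms
`∅`, `{∞}`, `[p₀,∞]`, `(p₀,∞]`, `[p₀,∞)`, `(p₀,∞)` for some `p₀ ∈ [1,∞)`. -/
theorem statement3 {X : Type*} [MetricSpace X] [MeasurableSpace X] [OpensMeasurableSpace X]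
    {μ : Measure X} (hcomplete : μ.IsComplete) (B : DiffBasis μ) :
    ∃ p₀ : ℝ≥0∞, 1 ≤ p₀ ∧ p₀ ≠ ⊤ ∧
      (B.diffSet = ∅ ∨ B.diffSet = {⊤} ∨
       B.diffSet = Set.Icc p₀ ⊤ ∨ B.diffSet = Set.Ioc p₀ ⊤ ∨
       B.diffSet = Set.Ico p₀ ⊤ ∨ B.diffSet = Set.Ioo p₀ ⊤) := by
  classical
  set D := B.diffSet with hD
  set F : Set ℝ≥0∞ := {r | r ∈ D ∧ r ≠ ⊤} with hF
  by_cases hFne : F.Nonempty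
  · obtain ⟨p, hpF⟩ := hFne
    set p₀ := sInf F with hp₀
    have h1p₀ : 1 ≤ p₀ := le_sInf fun r hr => hr.1.1
    have hp₀le : p₀ ≤ p := sInf_le hpF
    have hp₀top : p₀ ≠ ⊤ := fun h => hpF.2 (top_le_iff.mp (h ▸ hp₀le))
    refine ⟨p₀, h1p₀, hp₀top, ?_⟩
    -- key: any finite r above some element of F is in D
    have hup : ∀ r : ℝ≥0∞, r ≠ ⊤ → (∃ s ∈ F, s ≤ r) → r ∈ D := by
      rintro r hr ⟨s, hsF, hsr⟩
      exact ⟨le_trans hsF.1.1 hsr,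
        B.differentiates_mono hsF.1.1 hsF.2 hr hsr hsF.1.2⟩
    by_cases hp₀D : p₀ ∈ D
    · by_cases htop : (⊤ : ℝ≥0∞) ∈ D
      · refine Or.inr (Or.inr (Or.inl ?_))
        ext r
        simp only [Set.mem_Icc, le_top, and_true]
        constructor
        · intro hr
          by_cases h : r = ⊤
          · simp [h]
          · exact sInf_le ⟨hr, h⟩
        · intro hr
          by_cases h : r = ⊤
          · exact h ▸ htop
          · exact hup r h ⟨p₀, ⟨hp₀D, hp₀top⟩, hr⟩
      · refine Or.inr (Or.inr (Or.inr (Or.inr (Or.inl ?_))))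
        ext r
        simp only [Set.mem_Ico]
        constructor
        · intro hr
          have h : r ≠ ⊤ := fun h => htop (h ▸ hr)
          exact ⟨sInf_le ⟨hr, h⟩, lt_top_iff_ne_top.mpr h⟩
        · rintro ⟨h1, h2⟩
          exact hup r h2.ne ⟨p₀, ⟨hp₀D, hp₀top⟩, h1⟩
    · by_cases htop : (⊤ : ℝ≥0∞) ∈ D
      · refine Or.inr (Or.inr (Or.inr (Or.inl ?_)))
        ext r
        simp only [Set.mem_Ioc, le_top, and_true]
        constructor
        · intro hr
          by_cases h : r = ⊤
          · exact h ▸ lt_top_iff_ne_top.mpr hp₀top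
          · have hle : p₀ ≤ r := sInf_le ⟨hr, h⟩
            rcases hle.lt_or_eq with h' | h'
            · exact h'
            · exact absurd (h' ▸ hr) hp₀D
        · intro hr
          by_cases h : r = ⊤
          · exact h ▸ htop
          · obtain ⟨s, hsF, hs⟩ := sInf_lt_iff.mp (hp₀ ▸ hr)
            exact hup r h ⟨s, hsF, hs.le⟩
      · refine Or.inr (Or.inr (Or.inr (Or.inr (Or.inr ?_))))
        ext r
        simp only [Set.mem_Ioo]
        constructor
        · intro hr
          have h : r ≠ ⊤ := fun h => htop (h ▸ hr)
          have hle : p₀ ≤ r := sInf_le ⟨hr, h⟩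
          rcases hle.lt_or_eq with h' | h'
          · exact ⟨h', lt_top_iff_ne_top.mpr h⟩
          · exact absurd (h' ▸ hr) hp₀D
        · rintro ⟨h1, h2⟩
          obtain ⟨s, hsF, hs⟩ := sInf_lt_iff.mp (hp₀ ▸ h1)
          exact hup r h2.ne ⟨s, hsF, hs.le⟩
  · -- no finite exponent works: D ⊆ {⊤}
    have hsub : D ⊆ {⊤} := by
      intro r hr
      by_contra h
      exact hFne ⟨r, hr, h⟩
    refine ⟨1, le_refl _, ENNReal.one_ne_top, ?_⟩
    by_cases htop : (⊤ : ℝ≥0∞) ∈ D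
    · refine Or.inr (Or.inl ?_)
      exact Set.Subset.antisymm hsub (by simpa using htop)
    · refine Or.inl ?_
      ext r
      simp only [Set.mem_empty_iff_false, iff_false]
      intro hr
      exact htop (hsub hr ▸ hr)
end

section
/- Let B be a differentiation basis in a metric measure space 𝕏 = (X, ρ, μ), and define diff(B) := {p ∈ [1,∞] : B differentiates L^p(𝕏)}. If X is a countable union of (possibly overlapping) open sets of finite measure, then (regardless of whether 𝕏 is complete) there exists p₀ ∈ [1,∞) such that diff(B) equals one of the following four sets: ∅, {∞}, [p₀,∞], (p₀,∞]. -/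
open MeasureTheory Filter Metric Topology ENNReal

theorem diff_mono {X : Type*} [MetricSpace X] [MeasurableSpace X] [OpensMeasurableSpace X]
    {μ : Measure X} (B : DiffBasis μ) (G : ℕ → Set X) (hGopen : ∀ n, IsOpen (G n))
    (hGfin : ∀ n, μ (G n) < ⊤) (hGcov : (⋃ n, G n) = Set.univ) {p q : ℝ≥0∞}
    (hpq : p ≤ q) (hp : B.Differentiates p) : B.Differentiates q := by
  intro f hf
  set g : ℕ → X → ℝ := fun n => (G n).indicator f with hg
  have hgmem : ∀ n, MemLp (g n) p μ := by
    intro n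
    refine (hf.indicator (hGopen n).measurableSet).mono_exponent_of_measure_support_ne_top
      (s := G n) (fun x hx => Set.indicator_of_notMem hx f) (hGfin n).ne hpq
  have h := ae_all_iff.mpr (fun n => hp (g n) (hgmem n))
  filter_upwards [h] with x hx S hS
  obtain ⟨n, hxn⟩ : ∃ n, x ∈ G n := by
    have : x ∈ ⋃ n, G n := hGcov ▸ Set.mem_univ x
    exact Set.mem_iUnion.mp this
  obtain ⟨ε, hε, hball⟩ := Metric.isOpen_iff.mp (hGopen n) x hxn
  obtain ⟨hmem, r, hr, hsub⟩ := hS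
  have hev : ∀ᶠ k in atTop, S k ⊆ G n := by
    filter_upwards [hr.eventually_lt_const hε] with k hk
    exact (hsub k).trans ((Metric.ball_subset_ball hk.le).trans hball)
  have key : (fun k => ⨍ y in S k, g n y ∂μ) =ᶠ[atTop] fun k => ⨍ y in S k, f y ∂μ := by
    filter_upwards [hev] with k hk
    refine setAverage_congr_fun (B.measurableSet' x (S k) (hmem k)) ?_
    exact Filter.Eventually.of_forall fun y hy => Set.indicator_of_mem (hk hy) f
  have hgx : g n x = f x := Set.indicator_of_mem hxn f
  exact (hgx ▸ hx n S ⟨hmem, r, hr, hsub⟩ :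
    Tendsto (fun k => ⨍ y in S k, g n y ∂μ) atTop (𝓝 (f x))).congr' key

/-- **Theorem (statement 4).** Let `B` be a differentiation basis in a metric measure space
`𝕏 = (X, ρ, μ)`. If `X` is a countable union of (possibly overlapping) open sets of finite
measure, then (regardless of completeness) `diff(B)` takes one of the four forms
`∅`, `{∞}`, `[p₀,∞]`, `(p₀,∞]` for some `p₀ ∈ [1,∞)`. -/
theorem statement4 {X : Type*} [MetricSpace X] [MeasurableSpace X] [OpensMeasurableSpace X]
    {μ : Measure X} (B : DiffBasis μ) (G : ℕ → Set X) (hGopen : ∀ n, IsOpen (G n))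
    (hGfin : ∀ n, μ (G n) < ⊤) (hGcov : (⋃ n, G n) = Set.univ) :
    ∃ p₀ : ℝ≥0∞, 1 ≤ p₀ ∧ p₀ ≠ ⊤ ∧
      (B.diffSet = ∅ ∨ B.diffSet = {⊤} ∨
       B.diffSet = Set.Icc p₀ ⊤ ∨ B.diffSet = Set.Ioc p₀ ⊤) := by
  classical
  set D := B.diffSet with hD
  have mono : ∀ {p q : ℝ≥0∞}, p ∈ D → p ≤ q → q ∈ D := by
    intro p q hp hpq
    exact ⟨hp.1.trans hpq, diff_mono B G hGopen hGfin hGcov hpq hp.2⟩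
  by_cases hne : D = ∅
  · exact ⟨1, le_refl 1, one_ne_top, Or.inl hne⟩
  obtain ⟨p, hpD⟩ := Set.nonempty_iff_ne_empty.mpr hne
  have htop : ⊤ ∈ D := mono hpD le_top
  set p₀ := sInf D with hp₀
  have hone : 1 ≤ p₀ := le_sInf fun q hq => hq.1
  by_cases hinf : p₀ = ⊤
  · refine ⟨1, le_refl 1, one_ne_top, Or.inr (Or.inl ?_)⟩
    ext q
    simp only [Set.mem_singleton_iff]
    constructor
    · intro hq
      have h2 : p₀ ≤ q := sInf_le hq
      rw [hinf] at h2
      exact top_le_iff.mp h2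
    · rintro rfl; exact htop
  have hsub : D ⊆ Set.Icc p₀ ⊤ := fun q hq => ⟨sInf_le hq, le_top⟩
  have hIoc : Set.Ioc p₀ ⊤ ⊆ D := by
    rintro q ⟨hq1, _⟩
    obtain ⟨r, hrD, hrq⟩ := exists_lt_of_csInf_lt ⟨p, hpD⟩ hq1
    exact mono hrD hrq.le
  refine ⟨p₀, hone, hinf, ?_⟩
  by_cases hmem : p₀ ∈ D
  · refine Or.inr (Or.inr (Or.inl ?_))
    apply Set.Subset.antisymm hsub
    rintro q ⟨hq1, _⟩
    exact mono hmem hq1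
  · refine Or.inr (Or.inr (Or.inr ?_))
    apply Set.Subset.antisymm _ hIoc
    intro q hq
    exact ⟨lt_of_le_of_ne (sInf_le hq) (fun h => hmem (h ▸ hq)), le_top⟩
end

section
/- Let B be a differentiation basis in a complete metric measure space 𝕏 = (X, ρ, μ), and let p₁, p₂ ∈ [1,∞) with p₁ < p₂. If B differentiates L^{p₁}(𝕏), then B differentiates L^{p₂}(𝕏). -/
open MeasureTheory Filter Metric Topology ENNReal

/-- **Theorem (statement 6).** Let `B` be a differentiation basis in a complete metric measure
space `𝕏`, and let `p₁, p₂ ∈ [1,∞)` with `p₁ < p₂`. If `B` differentiates `L^{p₁}(𝕏)`, then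
`B` differentiates `L^{p₂}(𝕏)`. -/
theorem statement6 {X : Type*} [MetricSpace X] [MeasurableSpace X] [OpensMeasurableSpace X]
    {μ : Measure X} (hcomplete : μ.IsComplete) (B : DiffBasis μ) (p₁ p₂ : ℝ≥0∞)
    (hp₁ : 1 ≤ p₁) (hp₁₂ : p₁ < p₂) (hp₂ : p₂ ≠ ⊤)
    (hdiff : B.Differentiates p₁) : B.Differentiates p₂ := by

  intro f hf
  have hp1 : (1:ℝ≥0∞) ≤ p₂ := hp₁.trans hp₁₂.le
  have hp₂0 : p₂ ≠ 0 := (lt_of_lt_of_le zero_lt_one hp1).ne'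
  set f' := hf.1.mk f with hf'def
  have hff' : f =ᵐ[μ] f' := hf.1.ae_eq_mk
  have hf'sm : StronglyMeasurable f' := hf.1.stronglyMeasurable_mk
  have hf' : MemLp f' p₂ μ := hf.ae_eq hff'
  set c : ℕ → NNReal := fun m => ((m : NNReal) + 1)⁻¹ with hc
  have hcpos : ∀ m, 0 < c m := fun m =>
    inv_pos.2 (add_pos_of_nonneg_of_pos (by positivity) zero_lt_one)
  set E : ℕ → Set X := fun m => {y | c m ≤ ‖f' y‖₊} with hE
  have hEmeas : ∀ m, MeasurableSet (E m) :=
    fun m => measurableSet_le measurable_const hf'sm.measurable.nnnorm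
  have hEfin : ∀ m, μ (E m) < ∞ := fun m =>
    hf'.meas_ge_lt_top hp₂0 hp₂ (hcpos m).ne'
  set g : ℕ → X → ℝ := fun m => (E m).indicator f' with hg
  have hgmem₂ : ∀ m, MemLp (g m) p₂ μ := fun m => hf'.indicator (hEmeas m)
  have hgmem : ∀ m, MemLp (g m) p₁ μ := fun m =>
    (hgmem₂ m).mono_exponent_of_measure_support_ne_top
      (fun y hy => Set.indicator_of_notMem hy _) (hEfin m).ne hp₁₂.le
  have hdiffg : ∀ m, ∀ᵐ x ∂μ, ∀ S : ℕ → Set X, ContractsTo B.sets x S →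
      Tendsto (fun n => ⨍ y in S n, g m y ∂μ) atTop (𝓝 (g m x)) :=
    fun m => hdiff (g m) (hgmem m)
  filter_upwards [hff', ae_all_iff.2 hdiffg] with x hx hgx S hS
  have havg_eq : ∀ n, ⨍ y in S n, f y ∂μ = ⨍ y in S n, f' y ∂μ := fun n =>
    average_congr (ae_restrict_of_ae hff')
  simp_rw [havg_eq, hx]
  have hSmem : ∀ n, S n ∈ B.sets x := hS.1
  have hSmeas : ∀ n, MeasurableSet (S n) := fun n => B.measurableSet' x _ (hSmem n)
  have hSpos : ∀ n, 0 < μ (S n) := fun n => B.measure_pos x _ (hSmem n)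
  have hSfin : ∀ n, μ (S n) < ∞ := fun n => B.measure_lt_top x _ (hSmem n)
  have hInt : ∀ n, IntegrableOn f' (S n) μ := fun n => by
    haveI : IsFiniteMeasure (μ.restrict (S n)) :=
      ⟨by rw [Measure.restrict_apply_univ]; exact hSfin n⟩
    exact (hf'.restrict (S n)).integrable hp1
  have hIntg : ∀ m n, IntegrableOn (g m) (S n) μ := fun m n => by
    haveI : IsFiniteMeasure (μ.restrict (S n)) :=
      ⟨by rw [Measure.restrict_apply_univ]; exact hSfin n⟩
    exact ((hgmem₂ m).restrict (S n)).integrable hp1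
  have hbound : ∀ m y, ‖f' y - g m y‖ ≤ (c m : ℝ) := by
    intro m y
    by_cases hy : y ∈ E m
    · simp only [hg, Set.indicator_of_mem hy, sub_self, norm_zero]
      exact (c m).coe_nonneg
    · simp only [hg, Set.indicator_of_notMem hy, sub_zero]
      have h1 : ‖f' y‖₊ < c m := lt_of_not_ge hy
      have h2 : (‖f' y‖₊ : ℝ) ≤ (c m : ℝ) := by exact_mod_cast h1.le
      simpa using h2
  rw [Metric.tendsto_atTop]
  intro δ hδ
  obtain ⟨m, hm⟩ : ∃ m : ℕ, (c m : ℝ) < δ / 3 := by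
    obtain ⟨m, hm⟩ := exists_nat_gt (3 / δ)
    refine ⟨m, ?_⟩
    have hcast : (c m : ℝ) = ((m : ℝ) + 1)⁻¹ := by push_cast [hc]; ring
    have h3δ : (0:ℝ) < 3 / δ := by positivity
    have h1 : 3 / δ < (m : ℝ) + 1 := hm.trans (lt_add_one _)
    have h2 : ((m : ℝ) + 1)⁻¹ < (3 / δ)⁻¹ := by
      exact inv_strictAnti₀ h3δ h1
    rw [hcast, inv_div] at *
    linarith [h2]
  have htend := hgx m S hS
  rw [Metric.tendsto_atTop] at htend
  obtain ⟨N, hN⟩ := htend (δ / 3) (by linarith)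
  refine ⟨N, fun n hn => ?_⟩
  have hμ : 0 < (μ (S n)).toReal := ENNReal.toReal_pos (hSpos n).ne' (hSfin n).ne
  have hdist1 : dist (⨍ y in S n, f' y ∂μ) (⨍ y in S n, g m y ∂μ) ≤ (c m : ℝ) := by
    rw [dist_eq_norm, setAverage_eq, setAverage_eq, ← smul_sub,
      ← integral_sub (hInt n) (hIntg m n), norm_smul]
    have hint_bound : ‖∫ y in S n, (f' y - g m y) ∂μ‖ ≤ (c m : ℝ) * (μ (S n)).toReal :=
      norm_setIntegral_le_of_norm_le_const (hSfin n) (fun y _ => hbound m y)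
    have hnorm : ‖(μ (S n)).toReal⁻¹‖ = (μ (S n)).toReal⁻¹ := by
      rw [Real.norm_eq_abs, abs_of_nonneg (by positivity)]
    rw [Measure.real, hnorm]
    calc (μ (S n)).toReal⁻¹ * ‖∫ y in S n, (f' y - g m y) ∂μ‖
        ≤ (μ (S n)).toReal⁻¹ * ((c m : ℝ) * (μ (S n)).toReal) := by
          apply mul_le_mul_of_nonneg_left hint_bound (by positivity)
      _ = (c m : ℝ) := by field_simp
  have hdist3 : dist (g m x) (f' x) ≤ (c m : ℝ) := by
    rw [dist_eq_norm, norm_sub_rev]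
    exact hbound m x
  have hdist2 : dist (⨍ y in S n, g m y ∂μ) (g m x) < δ / 3 := hN n hn
  calc dist (⨍ y in S n, f' y ∂μ) (f' x)
      ≤ dist (⨍ y in S n, f' y ∂μ) (⨍ y in S n, g m y ∂μ)
        + dist (⨍ y in S n, g m y ∂μ) (g m x) + dist (g m x) (f' x) :=
        dist_triangle4 _ _ _ _
    _ < δ := by linarith
end

section
/- Let B be a differentiation basis in a metric measure space 𝕏 = (X, ρ, μ) such that X = ⋃_{n∈ℕ} G_n for open sets G_n ⊆ X with μ(G_n) < ∞, and let p₁ ∈ [1,∞), p₂ ∈ (p₁,∞]. If B differentiates L^{p₁}(𝕏), then B differentiates L^{p₂}(𝕏). -/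
open MeasureTheory Filter Metric Topology ENNReal

/-- **Theorem (statement 7).** Let `B` be a differentiation basis in a metric measure space
`𝕏 = (X, ρ, μ)` such that `X = ⋃ₙ Gₙ` for open sets `Gₙ` of finite measure, and let
`p₁ ∈ [1,∞)`, `p₂ ∈ (p₁,∞]`. If `B` differentiates `L^{p₁}(𝕏)`, then `B` differentiates
`L^{p₂}(𝕏)`. -/
theorem statement7 {X : Type*} [MetricSpace X] [MeasurableSpace X] [OpensMeasurableSpace X]
    {μ : Measure X} (B : DiffBasis μ) (G : ℕ → Set X) (hGopen : ∀ n, IsOpen (G n))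
    (hGfin : ∀ n, μ (G n) < ⊤) (hGcov : (⋃ n, G n) = Set.univ)
    (p₁ p₂ : ℝ≥0∞) (hp₁ : 1 ≤ p₁) (hp₁' : p₁ ≠ ⊤) (hp₁₂ : p₁ < p₂)
    (hdiff : B.Differentiates p₁) : B.Differentiates p₂ := by
  intro f hf
  have hgmem : ∀ n : ℕ, MemLp ((G n).indicator f) p₁ μ := fun n =>
    (hf.indicator (hGopen n).measurableSet).mono_exponent_of_measure_support_ne_top
      (fun x hx => Set.indicator_of_notMem hx f) (hGfin n).ne hp₁₂.le
  filter_upwards [ae_all_iff.2 fun n => hdiff _ (hgmem n)] with x hx S hS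
  obtain ⟨n, hxG⟩ : ∃ n, x ∈ G n := by
    have hx' : x ∈ (⋃ n, G n) := hGcov ▸ Set.mem_univ x
    exact Set.mem_iUnion.1 hx'
  have htend := hx n S hS
  rw [Set.indicator_of_mem hxG f] at htend
  refine htend.congr' ?_
  obtain ⟨hSmem, r, hr, hSr⟩ := hS
  obtain ⟨ε, hε, hball⟩ := Metric.isOpen_iff.1 (hGopen n) x hxG
  filter_upwards [hr.eventually (gt_mem_nhds hε)] with k hk
  have hsub : S k ⊆ G n := (hSr k).trans ((Metric.ball_subset_ball hk.le).trans hball)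
  refine setAverage_congr_fun (μ := μ) (B.measurableSet' x (S k) (hSmem k)) ?_
  exact ae_of_all _ fun y hy => Set.indicator_of_mem (hsub hy) f
end

section
/- Let B be a differentiation basis in a metric measure space 𝕏 = (X, ρ, μ) such that ∞ ∉ diff(B) and diff(B) ≠ ∅. Then for every f ∈ L^∞(𝕏) and every subset E ⊆ E(f), either E has a measurable superset of measure zero, or E has no measurable superset of finite measure. -/
open MeasureTheory Filter Metric Topology ENNReal

section Deriv

variable {X : Type*} [MetricSpace X] [MeasurableSpace X]

/-- The set of limit values of averages of `f` along sequences contracting to `x`. -/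
def limitValues (Bx : X → Set (Set X)) (μ : MeasureTheory.Measure X) (f : X → ℝ)
    (x : X) : Set EReal :=
  {c | ∃ S : ℕ → Set X, ContractsTo Bx x S ∧
      Tendsto (fun n => ((⨍ y in S n, f y ∂μ : ℝ) : EReal)) atTop (𝓝 c)}

/-- The upper derivative `f̄(x)`: the largest limit value of averages along sequences
contracting to `x`. -/
noncomputable def upperDeriv (Bx : X → Set (Set X)) (μ : MeasureTheory.Measure X)
    (f : X → ℝ) (x : X) : EReal :=
  sSup (limitValues Bx μ f x)

/-- The lower derivative `f̲(x)`: the smallest limit value of averages along sequences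
contracting to `x`. -/
noncomputable def lowerDeriv (Bx : X → Set (Set X)) (μ : MeasureTheory.Measure X)
    (f : X → ℝ) (x : X) : EReal :=
  sInf (limitValues Bx μ f x)

/-- The exceptional set `E(f) = {x : f̄(x) ≠ f(x) or f̲(x) ≠ f(x)}`. -/
def exceptSet (Bx : X → Set (Set X)) (μ : MeasureTheory.Measure X) (f : X → ℝ) : Set X :=
  {x | upperDeriv Bx μ f x ≠ (f x : EReal) ∨ lowerDeriv Bx μ f x ≠ (f x : EReal)}

end Deriv

/-- **Theorem (statement 8).** Let `B` be a differentiation basis in a metric measure space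
`𝕏` such that `∞ ∉ diff(B)` and `diff(B) ≠ ∅`. Then for every `f ∈ L^∞(𝕏)` and every subset
`E ⊆ E(f)` of the exceptional set, either `E` has a measurable superset of measure zero, or
`E` has no measurable superset of finite measure. -/
theorem statement8 {X : Type*} [MetricSpace X] [MeasurableSpace X] [OpensMeasurableSpace X]
    {μ : Measure X} (B : DiffBasis μ)
    (htop : ⊤ ∉ B.diffSet) (hne : B.diffSet ≠ ∅)
    (f : X → ℝ) (hf : MemLp f ⊤ μ) (E : Set X) (hE : E ⊆ exceptSet B.sets μ f) :
    (∃ A : Set X, MeasurableSet A ∧ E ⊆ A ∧ μ A = 0) ∨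
      ¬ ∃ A : Set X, MeasurableSet A ∧ E ⊆ A ∧ μ A < ⊤ := by
  
  by_cases hfin : ∃ A : Set X, MeasurableSet A ∧ E ⊆ A ∧ μ A < ⊤
  case neg => exact Or.inr hfin
  left
  obtain ⟨A, hA, hEA, hAfin⟩ := hfin
  obtain ⟨p, hp⟩ : ∃ p, p ∈ B.diffSet := Set.nonempty_iff_ne_empty.2 hne
  have hpd : B.Differentiates p := hp.2
  set C : ℝ := (eLpNorm f ⊤ μ).toReal with hC
  have hSup_ne : eLpNormEssSup f μ ≠ ⊤ := by
    have := hf.2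
    rwa [eLpNorm_exponent_top, lt_top_iff_ne_top] at this
  have hbound : ∀ᵐ x ∂μ, ‖f x‖ ≤ C := by
    filter_upwards [ae_le_eLpNormEssSup (f := f) (μ := μ)] with x hx
    calc ‖f x‖ = ((‖f x‖₊ : ℝ≥0∞)).toReal := by simp
      _ ≤ (eLpNormEssSup f μ).toReal := ENNReal.toReal_mono hSup_ne hx
      _ = C := by rw [hC, eLpNorm_exponent_top]
  have hone : MemLp (A.indicator fun _ => (1 : ℝ)) p μ :=
    memLp_indicator_const p hA 1 (Or.inr hAfin.ne)
  have hg : MemLp (A.indicator f) p μ := by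
    refine hone.of_le_mul (c := C) (hf.1.indicator hA) ?_
    filter_upwards [hbound] with x hx
    by_cases hxA : x ∈ A
    · simp only [Set.indicator_of_mem hxA, norm_one, mul_one]
      exact hx
    · simp [Set.indicator_of_notMem hxA]
  -- the key pointwise statement
  have hae : ∀ᵐ x ∂μ, x ∈ A → x ∉ exceptSet B.sets μ f := by
    filter_upwards [hpd _ hg, hpd _ hone, B.ae_contracts] with x hx1 hx2 hx4 hxA
    -- main convergence claim
    have main : ∀ S : ℕ → Set X, ContractsTo B.sets x S →
        Tendsto (fun n => ⨍ y in S n, f y ∂μ) atTop (𝓝 (f x)) := by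
      intro S hS
      have hxg : A.indicator f x = f x := Set.indicator_of_mem hxA f
      have hxone : A.indicator (fun _ => (1 : ℝ)) x = 1 := Set.indicator_of_mem hxA _
      have hb : Tendsto (fun n => ⨍ y in S n, A.indicator f y ∂μ) atTop (𝓝 (f x)) := by
        have := hx1 S hS; rwa [hxg] at this
      have hd : Tendsto (fun n => ⨍ y in S n, A.indicator (fun _ => (1 : ℝ)) y ∂μ)
          atTop (𝓝 1) := by
        have := hx2 S hS; rwa [hxone] at this
      -- per-n bound
      have bound : ∀ n, ‖(⨍ y in S n, f y ∂μ) - ⨍ y in S n, A.indicator f y ∂μ‖ ≤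
          C * (1 - ⨍ y in S n, A.indicator (fun _ => (1 : ℝ)) y ∂μ) := by
        intro n
        have hSB := hS.1 n
        have hSm : MeasurableSet (S n) := B.measurableSet' x _ hSB
        have hS0 : μ (S n) ≠ 0 := (B.measure_pos x _ hSB).ne'
        have hST : μ (S n) ≠ ⊤ := (B.measure_lt_top x _ hSB).ne
        haveI : IsFiniteMeasure (μ.restrict (S n)) :=
          ⟨by rwa [Measure.restrict_apply_univ, lt_top_iff_ne_top]⟩
        have hfi : Integrable f (μ.restrict (S n)) :=
          memLp_one_iff_integrable.mp ((hf.restrict (S n)).mono_exponent le_top)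
        have hgi : Integrable (A.indicator f) (μ.restrict (S n)) := hfi.indicator hA
        have honei : Integrable (A.indicator fun _ => (1 : ℝ)) (μ.restrict (S n)) :=
          (integrable_const 1).indicator hA
        set t : ℝ := (μ (S n)).toReal with hts
        have ht : 0 < t := ENNReal.toReal_pos hS0 hST
        have hsplit : (⨍ y in S n, f y ∂μ) - ⨍ y in S n, A.indicator f y ∂μ =
            t⁻¹ * ∫ y in S n, (f y - A.indicator f y) ∂μ := by
          rw [setAverage_eq, setAverage_eq, integral_sub hfi hgi]
          simp only [smul_eq_mul, measureReal_def, ← hts]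
          ring
        have hnorm : ‖∫ y in S n, (f y - A.indicator f y) ∂μ‖ ≤
            ∫ y in S n, (C * (1 - A.indicator (fun _ => (1 : ℝ)) y)) ∂μ := by
          refine (norm_integral_le_integral_norm _).trans ?_
          refine integral_mono_ae (hfi.sub hgi).norm
            (((integrable_const (1 : ℝ)).sub honei).const_mul C) ?_
          refine ae_restrict_of_ae ?_
          filter_upwards [hbound] with y hy
          by_cases hyA : y ∈ A
          · simp [Set.indicator_of_mem hyA]
          · simp only [Set.indicator_of_notMem hyA, sub_zero]
            simpa using hy
        have hint : ∫ y in S n, (C * (1 - A.indicator (fun _ => (1 : ℝ)) y)) ∂μ =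
            C * (t - ∫ y in S n, A.indicator (fun _ => (1 : ℝ)) y ∂μ) := by
          rw [integral_const_mul, integral_sub (integrable_const 1) honei]
          simp [hts, measureReal_def]
        have hCnn : 0 ≤ C := ENNReal.toReal_nonneg
        rw [hsplit, norm_mul, norm_inv, Real.norm_of_nonneg ht.le]
        calc t⁻¹ * ‖∫ y in S n, (f y - A.indicator f y) ∂μ‖
            ≤ t⁻¹ * (C * (t - ∫ y in S n, A.indicator (fun _ => (1 : ℝ)) y ∂μ)) := by
              refine mul_le_mul_of_nonneg_left ?_ (inv_nonneg.2 ht.le)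
              rw [← hint]; exact hnorm
          _ = C * (1 - ⨍ y in S n, A.indicator (fun _ => (1 : ℝ)) y ∂μ) := by
              rw [setAverage_eq]
              simp only [smul_eq_mul, measureReal_def, ← hts]
              field_simp
      have hu : Tendsto (fun n => (⨍ y in S n, f y ∂μ) -
          ⨍ y in S n, A.indicator f y ∂μ) atTop (𝓝 0) := by
        have hlim : Tendsto (fun n =>
            C * (1 - ⨍ y in S n, A.indicator (fun _ => (1 : ℝ)) y ∂μ)) atTop (𝓝 0) := by
          have := (tendsto_const_nhds (x := (1 : ℝ)).sub hd).const_mul C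
          simpa using this
        exact squeeze_zero_norm bound hlim
      have := hb.add hu
      simpa using this
    -- no exceptional values
    have hT : limitValues B.sets μ f x = {((f x : ℝ) : EReal)} := by
      apply Set.Subset.antisymm
      · rintro c ⟨S, hScon, hc⟩
        have h2 : Tendsto (fun n => ((⨍ y in S n, f y ∂μ : ℝ) : EReal)) atTop
            (𝓝 ((f x : ℝ) : EReal)) :=
          (continuous_coe_real_ereal.tendsto _).comp (main S hScon)
        exact tendsto_nhds_unique hc h2
      · rintro c rfl
        obtain ⟨S, hScon⟩ := hx4
        exact ⟨S, hScon, (continuous_coe_real_ereal.tendsto _).comp (main S hScon)⟩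
    intro hxE
    rcases hxE with h | h
    · exact h (by rw [upperDeriv, hT, sSup_singleton])
    · exact h (by rw [lowerDeriv, hT, sInf_singleton])
  -- build the null superset
  set N : Set X := {x | ¬ (x ∈ A → x ∉ exceptSet B.sets μ f)} with hN
  have hNnull : μ N = 0 := by
    rw [hN]; exact ae_iff.mp hae
  refine ⟨toMeasurable μ N, measurableSet_toMeasurable μ N, ?_, by
    rw [measure_toMeasurable]; exact hNnull⟩
  intro x hx
  apply subset_toMeasurable
  intro hP
  exact hP (hEA hx) (hE hx)
end

section
/- Let 𝕏 = (X, ρ, μ) be a metric measure space and fix p ∈ [1,∞). For every n ∈ ℕ, let 𝒮_n be a countable collection of measurable sets of finite positive measure such that M_{𝒮_n} satisfies the weak-type (p,p) inequality with a constant C_p ∈ (0,∞) independent of n. Assume that whenever S₁ ∈ 𝒮_{n₁} and S₂ ∈ 𝒮_{n₂} for distinct n₁, n₂ ∈ ℕ, then S₁ ⊆ S₂ or S₂ ⊆ S₁ or S₁ ∩ S₂ = ∅. Then, with 𝒮 := ⋃_{n∈ℕ} 𝒮_n, the maximal operator M_𝒮 satisfies the weak-type (p,p) inequality with the same constant C_p.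 -/
open MeasureTheory Filter Metric Topology ENNReal

section Maximal

variable {X : Type*} [MetricSpace X] [MeasurableSpace X]

/-- The average of `‖f‖` over `S`, as an extended nonnegative real. -/
noncomputable def avgNorm (μ : MeasureTheory.Measure X) (f : X → ℝ) (S : Set X) : ℝ≥0∞ :=
  (∫⁻ y in S, (‖f y‖₊ : ℝ≥0∞) ∂μ) / μ S

/-- The maximal operator associated with the collection `𝒮`:
`M_𝒮 f (x) = sup {Avg_{|f|}(S) : x ∈ S ∈ 𝒮}` (the supremum over the empty set is `0`). -/
noncomputable def maximalFn (μ : MeasureTheory.Measure X) (𝒮 : Set (Set X)) (f : X → ℝ)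
    (x : X) : ℝ≥0∞ :=
  ⨆ (S : Set X) (_ : S ∈ 𝒮) (_ : x ∈ S), avgNorm μ f S

/-- The maximal operator of `𝒮` satisfies the weak-type `(p,p)` inequality with constant `C`. -/
def HasWeakType (μ : MeasureTheory.Measure X) (𝒮 : Set (Set X)) (p : ℝ) (C : ℝ≥0∞) : Prop :=
  ∀ f : X → ℝ, MemLp f (ENNReal.ofReal p) μ → ∀ l : ℝ≥0∞, l ≠ 0 → l ≠ ⊤ →
    l ^ p * μ {x | l < maximalFn μ 𝒮 f x} ≤
      C ^ p * eLpNorm f (ENNReal.ofReal p) μ ^ p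

/-- The maximal operator of `𝒮` is bounded on `L^∞` (the convention for weak type `(∞,∞)`). -/
def BoundedOnLinfty (μ : MeasureTheory.Measure X) (𝒮 : Set (Set X)) : Prop :=
  ∃ C : ℝ≥0∞, C ≠ ⊤ ∧ ∀ f : X → ℝ, MemLp f ⊤ μ →
    essSup (maximalFn μ 𝒮 f) μ ≤ C * eLpNorm f ⊤ μ

/-- `max(𝒮) = {p ∈ [1,∞] : M_𝒮 satisfies the weak-type (p,p) inequality}`, where weak type
`(∞,∞)` means boundedness on `L^∞`. -/
def maxSet (μ : MeasureTheory.Measure X) (𝒮 : Set (Set X)) : Set ℝ≥0∞ :=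
  {p : ℝ≥0∞ | 1 ≤ p ∧
    ((p ≠ ⊤ ∧ ∃ C : ℝ≥0∞, C ≠ ⊤ ∧ HasWeakType μ 𝒮 p.toReal C) ∨
      (p = ⊤ ∧ BoundedOnLinfty μ 𝒮))}

/-- The smallest weak-type `(p,p)` constant `‖M_𝒮‖_{L^p → L^{p,∞}}`. -/
noncomputable def weakNorm (μ : MeasureTheory.Measure X) (𝒮 : Set (Set X)) (p : ℝ) : ℝ≥0∞ :=
  sInf {C : ℝ≥0∞ | HasWeakType μ 𝒮 p C}

end Maximal

section
variable {X : Type*} [MetricSpace X] [MeasurableSpace X]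

lemma avgNorm_le_maximalFn (μ : Measure X) (𝒯 : Set (Set X)) (g : X → ℝ) {S : Set X} {x : X}
    (hS : S ∈ 𝒯) (hx : x ∈ S) : avgNorm μ g S ≤ maximalFn μ 𝒯 g x :=
  le_iSup_of_le S (le_iSup_of_le hS (le_iSup_of_le hx le_rfl))

end

/-- **Theorem (statement 10, Proposition P2).** Let `𝕏` be a metric measure space and fix
`p ∈ [1,∞)`. For every `n`, let `𝒮 n` be a countable collection of measurable sets of finite
positive measure such that `M_{𝒮 n}` satisfies the weak-type `(p,p)` inequality with a
constant `C ∈ (0,∞)` independent of `n`. Assume that whenever `S₁ ∈ 𝒮 n₁` and `S₂ ∈ 𝒮 n₂`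
for distinct `n₁ ≠ n₂`, then `S₁ ⊆ S₂`, `S₂ ⊆ S₁`, or `S₁ ∩ S₂ = ∅`. Then the maximal
operator of `𝒮 = ⋃ₙ 𝒮 n` satisfies the weak-type `(p,p)` inequality with the same
constant `C`. -/

theorem statement10 {X : Type*} [MetricSpace X] [MeasurableSpace X] {μ : Measure X}
    (p : ℝ) (hp : 1 ≤ p) (𝒮 : ℕ → Set (Set X))
    (hcnt : ∀ n, (𝒮 n).Countable)
    (hmeas : ∀ n, ∀ S ∈ 𝒮 n, MeasurableSet S)
    (hpos : ∀ n, ∀ S ∈ 𝒮 n, 0 < μ S)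
    (hfin : ∀ n, ∀ S ∈ 𝒮 n, μ S < ⊤)
    (C : ℝ≥0∞) (hC0 : 0 < C) (hC : C ≠ ⊤)
    (hweak : ∀ n, HasWeakType μ (𝒮 n) p C)
    (hnest : ∀ n₁ n₂, n₁ ≠ n₂ → ∀ S₁ ∈ 𝒮 n₁, ∀ S₂ ∈ 𝒮 n₂,
      S₁ ⊆ S₂ ∨ S₂ ⊆ S₁ ∨ S₁ ∩ S₂ = ∅) :
    HasWeakType μ (⋃ n, 𝒮 n) p C := by
  classical
  intro f hf l hl0 hltop
  have hp0 : 0 < p := lt_of_lt_of_le one_pos hp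
  have hp'0 : ENNReal.ofReal p ≠ 0 := by
    simpa [ENNReal.ofReal_eq_zero] using hp0.not_ge
  have hp't : ENNReal.ofReal p ≠ ⊤ := ENNReal.ofReal_ne_top
  have hp'toReal : (ENNReal.ofReal p).toReal = p := ENNReal.toReal_ofReal hp0.le
  -- the p-th power of the LpSeminorm as a lintegral
  have hsnorm : ∀ h : X → ℝ,
      eLpNorm h (ENNReal.ofReal p) μ ^ p = ∫⁻ x, (‖h x‖₊ : ℝ≥0∞) ^ p ∂μ := by
    intro h
    rw [eLpNorm_eq_lintegral_rpow_enorm_toReal hp'0 hp't, hp'toReal, ← ENNReal.rpow_mul,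
      one_div_mul_cancel hp0.ne', ENNReal.rpow_one]
    simp only [enorm_eq_nnnorm]
  set Bad : Set (Set X) := {S | (∃ n, S ∈ 𝒮 n) ∧ l < avgNorm μ f S} with hBadDef
  -- superlevel set is covered by bad sets
  have hsub : {x | l < maximalFn μ (⋃ n, 𝒮 n) f x} ⊆ ⋃₀ Bad := by
    intro x hx
    simp only [Set.mem_setOf_eq, maximalFn, lt_iSup_iff, Set.mem_iUnion] at hx
    obtain ⟨S, hS, hxS, hl⟩ := hx
    exact ⟨S, ⟨hS, hl⟩, hxS⟩
  -- the key finite estimate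
  have key : ∀ F : Finset (Set X), (∀ S ∈ F, S ∈ Bad) →
      l ^ p * μ (⋃₀ (F : Set (Set X))) ≤
        C ^ p * eLpNorm f (ENNReal.ofReal p) μ ^ p := by
    intro F hF
    set idx : Set X → ℕ := fun S => sInf {n | S ∈ 𝒮 n} with hidxdef
    have hidx : ∀ S ∈ F, S ∈ 𝒮 (idx S) := fun S hS => Nat.sInf_mem (hF S hS).1
    have hidx_le : ∀ S, ∀ n, S ∈ 𝒮 n → idx S ≤ n := fun S n hn => Nat.sInf_le hn
    -- maximal elements above any element
    have hmax : ∀ S ∈ F, ∃ M, (M ∈ F ∧ ∀ T ∈ F, M ⊆ T → M = T) ∧ S ⊆ M := by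
      intro S hS
      have hfin' : {T | T ∈ (F : Set (Set X)) ∧ S ⊆ T}.Finite :=
        F.finite_toSet.subset fun T hT => hT.1
      obtain ⟨M, hM, hMmax⟩ :=
        Set.Finite.exists_maximalFor id _ hfin' ⟨S, hS, subset_rfl⟩
      exact ⟨M, ⟨hM.1, fun T hT hMT => subset_antisymm hMT (hMmax ⟨hT, hM.2.trans hMT⟩ hMT)⟩, hM.2⟩
    set K : ℕ → Set X := fun n =>
      ⋃₀ {M | (M ∈ F ∧ ∀ T ∈ F, M ⊆ T → M = T) ∧ idx M = n} with hKdef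
    have hKmeas : ∀ n, MeasurableSet (K n) := by
      intro n
      refine Set.Finite.measurableSet_sUnion
        (F.finite_toSet.subset fun M hM => hM.1.1) fun M hM => ?_
      exact hmeas (idx M) M (hidx M hM.1.1)
    have hKdisj : Pairwise (Function.onFun Disjoint K) := by
      intro n m hnm
      rw [Function.onFun, Set.disjoint_left]
      rintro x ⟨M, ⟨⟨hMF, hMmax⟩, hMn⟩, hxM⟩ ⟨M', ⟨⟨hM'F, hM'max⟩, hM'm⟩, hxM'⟩
      have hMn' : M ∈ 𝒮 n := hMn ▸ hidx M hMF
      have hM'm' : M' ∈ 𝒮 m := hM'm ▸ hidx M' hM'F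
      rcases hnest n m hnm M hMn' M' hM'm' with h | h | h
      · exact hnm (by rw [← hMn, ← hM'm, hMmax M' hM'F h])
      · exact hnm (by rw [← hMn, ← hM'm, (hM'max M hMF h).symm])
      · exact absurd (Set.mem_inter hxM hxM') (h ▸ Set.notMem_empty x)
    have hUnion : ⋃₀ (F : Set (Set X)) = ⋃ n, K n := by
      apply Set.Subset.antisymm
      · rintro x ⟨S, hS, hxS⟩
        obtain ⟨M, hM, hSM⟩ := hmax S hS
        exact Set.mem_iUnion.2 ⟨idx M, M, ⟨hM, rfl⟩, hSM hxS⟩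
      · refine Set.iUnion_subset fun n => ?_
        rintro x ⟨M, ⟨⟨hMF, _⟩, _⟩, hxM⟩
        exact ⟨M, hMF, hxM⟩
    -- per-index estimate
    have hper : ∀ n, l ^ p * μ (K n) ≤
        C ^ p * ∫⁻ x in K n, (‖f x‖₊ : ℝ≥0∞) ^ p ∂μ := by
      intro n
      set g : X → ℝ := (K n).indicator f with hgdef
      have hg : MemLp g (ENNReal.ofReal p) μ := hf.indicator (hKmeas n)
      have hsub2 : K n ⊆ {x | l < maximalFn μ (𝒮 n) g x} := by
        rintro x ⟨M, ⟨⟨hMF, hMmax⟩, hMn⟩, hxM⟩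
        have hMn' : M ∈ 𝒮 n := hMn ▸ hidx M hMF
        have hMK : M ⊆ K n := fun y hy => ⟨M, ⟨⟨hMF, hMmax⟩, hMn⟩, hy⟩
        have havg : avgNorm μ g M = avgNorm μ f M := by
          unfold avgNorm
          congr 1
          refine setLIntegral_congr_fun (hmeas n M hMn') (fun y hy => ?_)
          rw [hgdef, Set.indicator_of_mem (hMK hy)]
        have : l < avgNorm μ g M := havg ▸ (hF M hMF).2
        exact lt_of_lt_of_le this (avgNorm_le_maximalFn μ (𝒮 n) g hMn' hxM)
      have hind : eLpNorm g (ENNReal.ofReal p) μ ^ p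
          = ∫⁻ x in K n, (‖f x‖₊ : ℝ≥0∞) ^ p ∂μ := by
        rw [hsnorm g, ← lintegral_indicator (hKmeas n)]
        refine lintegral_congr fun x => ?_
        by_cases hx : x ∈ K n
        · simp [hgdef, Set.indicator_of_mem hx]
        · simp [hgdef, Set.indicator_of_notMem hx, ENNReal.zero_rpow_of_pos hp0]
      calc l ^ p * μ (K n) ≤ l ^ p * μ {x | l < maximalFn μ (𝒮 n) g x} :=
            mul_le_mul_right (measure_mono hsub2) _
        _ ≤ C ^ p * eLpNorm g (ENNReal.ofReal p) μ ^ p := hweak n g hg l hl0 hltop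
        _ = C ^ p * ∫⁻ x in K n, (‖f x‖₊ : ℝ≥0∞) ^ p ∂μ := by rw [hind]
    calc l ^ p * μ (⋃₀ (F : Set (Set X))) = l ^ p * ∑' n, μ (K n) := by
          rw [hUnion, measure_iUnion hKdisj hKmeas]
      _ = ∑' n, l ^ p * μ (K n) := ENNReal.tsum_mul_left.symm
      _ ≤ ∑' n, C ^ p * ∫⁻ x in K n, (‖f x‖₊ : ℝ≥0∞) ^ p ∂μ :=
          ENNReal.tsum_le_tsum hper
      _ = C ^ p * ∑' n, ∫⁻ x in K n, (‖f x‖₊ : ℝ≥0∞) ^ p ∂μ := ENNReal.tsum_mul_left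
      _ = C ^ p * ∫⁻ x in ⋃ n, K n, (‖f x‖₊ : ℝ≥0∞) ^ p ∂μ := by
          rw [lintegral_iUnion hKmeas hKdisj]
      _ ≤ C ^ p * ∫⁻ x, (‖f x‖₊ : ℝ≥0∞) ^ p ∂μ :=
          mul_le_mul_right (setLIntegral_le_lintegral _ _) _
      _ = C ^ p * eLpNorm f (ENNReal.ofReal p) μ ^ p := by rw [hsnorm f]
  -- now pass to the countable union
  by_cases hne : Bad.Nonempty
  · obtain ⟨g, hg⟩ := (Set.Countable.mono (fun S hS => Set.mem_iUnion.2 hS.1 : Bad ⊆ ⋃ n, 𝒮 n)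
      (by simpa using Set.countable_iUnion hcnt)).exists_eq_range hne
    set A : ℕ → Set X := fun k => ⋃₀ ((Finset.range k).image g : Set (Set X)) with hAdef
    have hAmono : Monotone A := fun i j hij =>
      Set.sUnion_subset_sUnion (by
        exact_mod_cast Finset.image_subset_image (Finset.range_subset_range.2 hij))
    have hAU : ⋃ k, A k = ⋃₀ Bad := by
      rw [hg]
      apply Set.Subset.antisymm
      · refine Set.iUnion_subset fun k => Set.sUnion_subset fun S hS => ?_
        simp only [Finset.coe_image, Set.mem_image, Finset.mem_coe,
          Finset.mem_range] at hS
        obtain ⟨i, _, rfl⟩ := hS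
        exact Set.subset_sUnion_of_mem ⟨i, rfl⟩
      · rintro x ⟨S, ⟨i, rfl⟩, hxS⟩
        refine Set.mem_iUnion.2 ⟨i + 1, g i, ?_, hxS⟩
        simp only [hAdef, Finset.coe_image, Set.mem_image, Finset.mem_coe, Finset.mem_range]
        exact ⟨i, Nat.lt_succ_self i, rfl⟩
    have := Directed.measure_iUnion (μ := μ) (hAmono.directed_le)
    calc l ^ p * μ {x | l < maximalFn μ (⋃ n, 𝒮 n) f x}
        ≤ l ^ p * μ (⋃₀ Bad) := mul_le_mul_right (measure_mono hsub) _
      _ = l ^ p * ⨆ k, μ (A k) := by rw [← hAU, this]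
      _ = ⨆ k, l ^ p * μ (A k) := by rw [ENNReal.mul_iSup]
      _ ≤ C ^ p * eLpNorm f (ENNReal.ofReal p) μ ^ p := by
          refine iSup_le fun k => key _ fun S hS => ?_
          simp only [Finset.mem_image, Finset.mem_range] at hS
          obtain ⟨i, _, rfl⟩ := hS
          rw [hg]
          exact ⟨i, rfl⟩
  · have : ⋃₀ Bad = ∅ := by
      rw [Set.not_nonempty_iff_eq_empty] at hne
      simp [hne]
    calc l ^ p * μ {x | l < maximalFn μ (⋃ n, 𝒮 n) f x}
        ≤ l ^ p * μ (⋃₀ Bad) := mul_le_mul_right (measure_mono hsub) _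
      _ = 0 := by simp [this]
      _ ≤ _ := zero_le
end

section
/- Let 𝕏 = (X, ρ, μ) be a metric measure space and let B be an uncentered differentiation basis in 𝕏 such that M_B f is measurable for every p ∈ [1,∞] and every f ∈ L^p(𝕏). Define max(B) := {p ∈ [1,∞] : M_B satisfies the weak-type (p,p) inequality}, with the convention that weak-type (∞,∞) means boundedness on L^∞(𝕏). Then max(B) takes one of the three forms {∞}, [p₀,∞], (p₀,∞] for some p₀ ∈ [1,∞). -/
open MeasureTheory Filter Metric Topology ENNReal

section AuxProof

variable {X : Type*} [MeasurableSpace X] {μ : MeasureTheory.Measure X} {𝒮 : Set (Set X)}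

lemma avgNorm_le_top' (f : X → ℝ) (S : Set X) : avgNorm μ f S ≤ eLpNorm f ⊤ μ := by
  rw [eLpNorm_exponent_top]
  refine ENNReal.div_le_of_le_mul ?_
  calc ∫⁻ y in S, (‖f y‖₊ : ℝ≥0∞) ∂μ
      ≤ ∫⁻ _ in S, eLpNormEssSup f μ ∂μ :=
        lintegral_mono_ae (ae_restrict_of_ae (enorm_ae_le_eLpNormEssSup f μ))
    _ = eLpNormEssSup f μ * μ S := setLIntegral_const S _

lemma maximalFn_le_top' (f : X → ℝ) (x : X) : maximalFn μ 𝒮 f x ≤ eLpNorm f ⊤ μ :=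
  iSup_le fun S => iSup_le fun _ => iSup_le fun _ => avgNorm_le_top' f S

lemma boundedOnLinfty' : BoundedOnLinfty μ 𝒮 :=
  ⟨1, one_ne_top, fun f _ => by
    rw [one_mul]
    exact essSup_le_of_ae_le _ (Filter.Eventually.of_forall (maximalFn_le_top' f))⟩

lemma pow_eLpNorm' {p : ℝ} (hp : 1 ≤ p) (f : X → ℝ) :
    eLpNorm f (ENNReal.ofReal p) μ ^ p = ∫⁻ x, (‖f x‖₊ : ℝ≥0∞) ^ p ∂μ := by
  have hp0 : (0:ℝ) < p := by linarith
  rw [eLpNorm_eq_lintegral_rpow_enorm_toReal (by simp [hp0]) (by simp),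
    ENNReal.toReal_ofReal hp0.le, ← ENNReal.rpow_mul, one_div, inv_mul_cancel₀ hp0.ne',
    ENNReal.rpow_one]
  rfl

lemma hasWeakType_of_le' {p q : ℝ} (hp : 1 ≤ p) (hpq : p ≤ q) {C : ℝ≥0∞} (hCt : C ≠ ⊤)
    (hC : HasWeakType μ 𝒮 p C) :
    ∃ C' : ℝ≥0∞, C' ≠ ⊤ ∧ HasWeakType μ 𝒮 q C' := by
  have hq : (1:ℝ) ≤ q := hp.trans hpq
  have hq0 : (0:ℝ) < q := by linarith
  have hqp0 : (0:ℝ) ≤ q - p := by linarith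
  refine ⟨(2 ^ q * C ^ p) ^ q⁻¹, ?_, ?_⟩
  · exact ENNReal.rpow_ne_top_of_nonneg (by positivity)
      (ENNReal.mul_ne_top (ENNReal.rpow_ne_top_of_nonneg hq0.le (by simp))
        (ENNReal.rpow_ne_top_of_nonneg (by linarith) hCt))
  have hCq : ((2 ^ q * C ^ p) ^ q⁻¹) ^ q = 2 ^ q * C ^ p := by
    rw [← ENNReal.rpow_mul, inv_mul_cancel₀ hq0.ne', ENNReal.rpow_one]
  intro f hf l hl0 hlt
  set t : ℝ≥0∞ := l / 2 with ht
  have ht0 : t ≠ 0 := by simp [ht, ENNReal.div_eq_zero_iff, hl0]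
  have httop : t ≠ ⊤ := by simp [ht, ENNReal.div_eq_top, hlt]
  set g : X → ℝ := fun y => if t < (‖f y‖₊ : ℝ≥0∞) then f y else 0 with hgdef
  have hfg : ∀ y, (‖f y‖₊ : ℝ≥0∞) ≤ (‖g y‖₊ : ℝ≥0∞) + t := by
    intro y
    by_cases h : t < (‖f y‖₊ : ℝ≥0∞)
    · simp [hgdef, h]
    · exact le_add_left (not_lt.mp h)
  have hgf : ∀ y, t ^ (q - p) * (‖g y‖₊ : ℝ≥0∞) ^ p ≤ (‖f y‖₊ : ℝ≥0∞) ^ q := by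
    intro y
    by_cases h : t < (‖f y‖₊ : ℝ≥0∞)
    · have hne0 : (‖f y‖₊ : ℝ≥0∞) ≠ 0 := by
        intro h0; rw [h0] at h; exact (not_lt.mpr (zero_le : (0:ℝ≥0∞) ≤ t)) h
      have hgy : g y = f y := by simp [hgdef, h]
      calc t ^ (q - p) * (‖g y‖₊ : ℝ≥0∞) ^ p
          ≤ (‖f y‖₊ : ℝ≥0∞) ^ (q - p) * (‖f y‖₊ : ℝ≥0∞) ^ p := by
            rw [hgy]; exact mul_le_mul_left (ENNReal.rpow_le_rpow h.le hqp0) _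
        _ = (‖f y‖₊ : ℝ≥0∞) ^ q := by
            rw [← ENNReal.rpow_add _ _ hne0 ENNReal.coe_ne_top, sub_add_cancel]
    · have hgy : g y = 0 := by simp [hgdef, h]
      simp [hgy, ENNReal.zero_rpow_of_pos (by linarith : (0:ℝ) < p)]
  have hM : ∀ x, maximalFn μ 𝒮 f x ≤ maximalFn μ 𝒮 g x + t := by
    intro x
    refine iSup_le fun S => iSup_le fun hS => iSup_le fun hx => ?_
    have havg : avgNorm μ f S ≤ avgNorm μ g S + t := by
      unfold avgNorm
      calc (∫⁻ y in S, (‖f y‖₊ : ℝ≥0∞) ∂μ) / μ S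
          ≤ (∫⁻ y in S, ((‖g y‖₊ : ℝ≥0∞) + t) ∂μ) / μ S :=
            ENNReal.div_le_div_right (lintegral_mono fun y => hfg y) _
        _ = ((∫⁻ y in S, (‖g y‖₊ : ℝ≥0∞) ∂μ) + t * μ S) / μ S := by
            rw [lintegral_add_right _ measurable_const, setLIntegral_const]
        _ = (∫⁻ y in S, (‖g y‖₊ : ℝ≥0∞) ∂μ) / μ S + (t * μ S) / μ S := ENNReal.add_div
        _ ≤ (∫⁻ y in S, (‖g y‖₊ : ℝ≥0∞) ∂μ) / μ S + t :=
            add_le_add_right (ENNReal.div_le_of_le_mul le_rfl) _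
    calc avgNorm μ f S ≤ avgNorm μ g S + t := havg
      _ ≤ maximalFn μ 𝒮 g x + t := by
          refine add_le_add_left ?_ t
          exact le_iSup_of_le S (le_iSup_of_le hS (le_iSup_of_le hx le_rfl))
  have hsub : {x | l < maximalFn μ 𝒮 f x} ⊆ {x | t < maximalFn μ 𝒮 g x} := by
    intro x hx
    by_contra h
    have h' : maximalFn μ 𝒮 g x ≤ t := not_lt.mp h
    have : l < l := by
      calc l < maximalFn μ 𝒮 f x := hx
        _ ≤ maximalFn μ 𝒮 g x + t := hM x
        _ ≤ t + t := add_le_add_left h' t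
        _ = l := ENNReal.add_halves l
    exact lt_irrefl _ this
  have hFfin : (∫⁻ x, (‖f x‖₊ : ℝ≥0∞) ^ q ∂μ) < ⊤ := by
    rw [← pow_eLpNorm' hq f]
    exact ENNReal.rpow_lt_top_of_nonneg hq0.le hf.eLpNorm_lt_top.ne
  have htqp0 : t ^ (q - p) ≠ 0 := by
    simp [ENNReal.rpow_eq_zero_iff, ht0, httop]
  have hGle : t ^ (q - p) * (∫⁻ x, (‖g x‖₊ : ℝ≥0∞) ^ p ∂μ) ≤ ∫⁻ x, (‖f x‖₊ : ℝ≥0∞) ^ q ∂μ := by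
    rw [← lintegral_const_mul' _ _ (ENNReal.rpow_ne_top_of_nonneg hqp0 httop)]
    exact lintegral_mono fun y => hgf y
  have hGfin : (∫⁻ x, (‖g x‖₊ : ℝ≥0∞) ^ p ∂μ) < ⊤ := by
    by_contra h
    rw [not_lt, top_le_iff] at h
    rw [h, ENNReal.mul_top htqp0] at hGle
    exact hFfin.ne (top_le_iff.mp hGle)
  have hmemg : MemLp g (ENNReal.ofReal p) μ := by
    obtain ⟨f', hf'm, hff'⟩ := hf.aestronglyMeasurable
    have hg'm : StronglyMeasurable fun y => if t < (‖f' y‖₊ : ℝ≥0∞) then f' y else 0 := by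
      refine StronglyMeasurable.ite ?_ hf'm stronglyMeasurable_const
      exact measurableSet_lt measurable_const
        (hf'm.measurable.nnnorm.coe_nnreal_ennreal)
    have hgg' : g =ᵐ[μ] fun y => if t < (‖f' y‖₊ : ℝ≥0∞) then f' y else 0 := by
      filter_upwards [hff'] with y hy
      simp only [hgdef, hy]
    refine ⟨(hg'm.aestronglyMeasurable).congr hgg'.symm, ?_⟩
    have hp0 : (0:ℝ) < p := by linarith
    rw [eLpNorm_eq_lintegral_rpow_enorm_toReal (by simp [hp0]) (by simp),
      ENNReal.toReal_ofReal hp0.le]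
    exact ENNReal.rpow_lt_top_of_nonneg (by positivity) hGfin.ne
  have hkey := hC g hmemg t ht0 httop
  rw [hCq, pow_eLpNorm' hq f, pow_eLpNorm' hp g] at *
  have hlq : l ^ q = 2 ^ q * t ^ q := by
    rw [← ENNReal.mul_rpow_of_nonneg _ _ hq0.le, ht,
      ENNReal.mul_div_cancel' (by norm_num) (by norm_num)]
  have htq : t ^ q = t ^ (q - p) * t ^ p := by
    rw [← ENNReal.rpow_add _ _ ht0 httop, sub_add_cancel]
  calc l ^ q * μ {x | l < maximalFn μ 𝒮 f x}
      ≤ l ^ q * μ {x | t < maximalFn μ 𝒮 g x} := mul_le_mul_right (measure_mono hsub) _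
    _ = 2 ^ q * (t ^ (q - p) * (t ^ p * μ {x | t < maximalFn μ 𝒮 g x})) := by
        rw [hlq, htq]; ring
    _ ≤ 2 ^ q * (t ^ (q - p) * (C ^ p * (∫⁻ x, (‖g x‖₊ : ℝ≥0∞) ^ p ∂μ))) :=
        mul_le_mul_right (mul_le_mul_right hkey _) _
    _ = 2 ^ q * C ^ p * (t ^ (q - p) * (∫⁻ x, (‖g x‖₊ : ℝ≥0∞) ^ p ∂μ)) := by ring
    _ ≤ 2 ^ q * C ^ p * (∫⁻ x, (‖f x‖₊ : ℝ≥0∞) ^ q ∂μ) := mul_le_mul_right hGle _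

lemma mem_maxSet_of_le {p q : ℝ≥0∞} (hpT : p ∈ maxSet μ 𝒮) (hpq : p ≤ q) :
    q ∈ maxSet μ 𝒮 := by
  obtain ⟨hp1, hcase⟩ := hpT
  refine ⟨hp1.trans hpq, ?_⟩
  by_cases hqtop : q = ⊤
  · exact Or.inr ⟨hqtop, boundedOnLinfty'⟩
  refine Or.inl ⟨hqtop, ?_⟩
  rcases hcase with ⟨hptop, C, hCt, hC⟩ | ⟨hptop, _⟩
  · have hp1' : (1:ℝ) ≤ p.toReal := by
      have := ENNReal.toReal_mono hptop hp1
      simpa using this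
    have hle : p.toReal ≤ q.toReal := ENNReal.toReal_mono hqtop hpq
    exact hasWeakType_of_le' hp1' hle hCt hC
  · exact absurd (top_le_iff.mp (hptop ▸ hpq)) hqtop

end AuxProof

/-- **Theorem (statement 15).** Let `B` be an uncentered differentiation basis in a metric
measure space `𝕏` such that `M_B f` is measurable for every `p ∈ [1,∞]` and `f ∈ L^p(𝕏)`.
Then `max(B)` takes one of the three forms `{∞}`, `[p₀,∞]`, `(p₀,∞]` for some `p₀ ∈ [1,∞)`. -/
theorem statement15 {X : Type*} [MetricSpace X] [MeasurableSpace X] [OpensMeasurableSpace X]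
    {μ : Measure X} (B : DiffBasis μ) (hunc : B.Uncentered)
    (hmeas : ∀ p : ℝ≥0∞, 1 ≤ p → ∀ f : X → ℝ, MemLp f p μ →
      Measurable (maximalFn μ B.family f)) :
    ∃ p₀ : ℝ≥0∞, 1 ≤ p₀ ∧ p₀ ≠ ⊤ ∧
      (maxSet μ B.family = {⊤} ∨ maxSet μ B.family = Set.Icc p₀ ⊤ ∨
        maxSet μ B.family = Set.Ioc p₀ ⊤) := by
  
  set T := maxSet μ B.family with hT
  have htop : ⊤ ∈ T := ⟨le_top, Or.inr ⟨rfl, boundedOnLinfty'⟩⟩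
  by_cases hTsing : T = {⊤}
  · exact ⟨1, le_rfl, one_ne_top, Or.inl hTsing⟩
  have hex : ∃ p ∈ T, p ≠ ⊤ := by
    by_contra h
    push_neg at h
    apply hTsing
    ext q
    simp only [Set.mem_singleton_iff]
    exact ⟨fun hq => h q hq, fun hq => hq ▸ htop⟩
  obtain ⟨p, hpT, hpne⟩ := hex
  refine ⟨sInf T, le_sInf fun b hb => hb.1, ?_, ?_⟩
  · exact ((sInf_le hpT).trans_lt (lt_top_iff_ne_top.mpr hpne)).ne
  have hsup : Set.Ioc (sInf T) ⊤ ⊆ T := by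
    intro q hq
    obtain ⟨r, hrT, hrq⟩ := sInf_lt_iff.mp hq.1
    exact mem_maxSet_of_le hrT hrq.le
  by_cases hmem : sInf T ∈ T
  · refine Or.inr (Or.inl ?_)
    refine Set.Subset.antisymm (fun q hq => ⟨sInf_le hq, le_top⟩) (fun q hq => ?_)
    rcases eq_or_lt_of_le hq.1 with h | h
    · exact h ▸ hmem
    · exact hsup ⟨h, hq.2⟩
  · refine Or.inr (Or.inr ?_)
    refine Set.Subset.antisymm (fun q hq => ?_) hsup
    refine ⟨lt_of_le_of_ne (sInf_le hq) ?_, le_top⟩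
    intro h
    exact hmem (h ▸ hq)
end

section
/- Let B be an uncentered differentiation basis in a metric measure space 𝕏 = (X, ρ, μ) consisting of either countably many measurable sets or arbitrarily many open sets, and let f ∈ L^p(𝕏) for some p ∈ [1,∞]. Then the upper and lower derivatives f̄ and f_ are measurable; in fact, for every λ ∈ ℝ, {x ∈ X : f̄(x) ≥ λ} = ⋂_{n∈ℕ} ⋃_{S ∈ B_{λ,n}} S, where B_{λ,n} consists of all S ∈ B such that Avg_f(S) ≥ λ − 2^{-n} and S ⊆ B(y, 2^{-n}) for some ball B(y, 2^{-n}) ⊆ X of radius 2^{-n}. -/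
open MeasureTheory Filter Metric Topology ENNReal

section AuxLemmas

variable {X : Type*} [MetricSpace X] [MeasurableSpace X] {μ : Measure X}

private lemma ereal_sSup_neg (s : Set EReal) : sSup (-s) = -sInf s := by
  apply le_antisymm
  · refine sSup_le fun x hx => ?_
    rw [Set.mem_neg] at hx
    exact EReal.le_neg_of_le_neg (sInf_le hx)
  · rw [EReal.neg_le]
    refine le_sInf fun x hx => ?_
    rw [EReal.neg_le]
    exact le_sSup (by rw [Set.mem_neg, neg_neg]; exact hx)

private lemma limitValues_neg (Bx : X → Set (Set X)) (μ : Measure X) (f : X → ℝ) (x : X) :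
    limitValues Bx μ (fun y => -f y) x = -(limitValues Bx μ f x) := by
  have key : ∀ S : Set X, ((⨍ y in S, -f y ∂μ : ℝ) : EReal)
      = -((⨍ y in S, f y ∂μ : ℝ) : EReal) := by
    intro S
    rw [show (⨍ y in S, -f y ∂μ) = -⨍ y in S, f y ∂μ from average_neg (μ := μ.restrict S) f, EReal.coe_neg]
  ext c
  simp only [Set.mem_neg, limitValues, Set.mem_setOf_eq]
  constructor
  · rintro ⟨S, hS, hc⟩
    exact ⟨S, hS, by simpa [key, neg_neg] using hc.neg⟩
  · rintro ⟨S, hS, hc⟩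
    exact ⟨S, hS, by simpa [key, neg_neg] using hc.neg⟩

private lemma lowerDeriv_eq (Bx : X → Set (Set X)) (μ : Measure X) (f : X → ℝ) :
    lowerDeriv Bx μ f = fun x => -upperDeriv Bx μ (fun y => -f y) x := by
  funext x
  rw [upperDeriv, limitValues_neg, ereal_sSup_neg, neg_neg, lowerDeriv]

private lemma key_eq (B : DiffBasis μ) (hunc : B.Uncentered) (f : X → ℝ) (l : ℝ) :
    {x | (l : EReal) ≤ upperDeriv B.sets μ f x} =
      ⋂ n : ℕ, ⋃ S ∈ {S | S ∈ B.family ∧ l - 2⁻¹ ^ n ≤ ⨍ y in S, f y ∂μ ∧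
        ∃ y : X, S ⊆ Metric.ball y (2⁻¹ ^ n)}, S := by
  ext x
  simp only [Set.mem_setOf_eq, Set.mem_iInter, Set.mem_iUnion, exists_prop]
  constructor
  · intro hx n
    have hpos : (0:ℝ) < 2⁻¹ ^ n := by positivity
    have hlt : ((l - 2⁻¹ ^ n : ℝ) : EReal) < upperDeriv B.sets μ f x :=
      lt_of_lt_of_le (by exact_mod_cast sub_lt_self l hpos) hx
    rw [upperDeriv, lt_sSup_iff] at hlt
    obtain ⟨c, ⟨S, ⟨hmem, r, hr, hsub⟩, hc⟩, hlc⟩ := hlt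
    have h1 : ∀ᶠ k in atTop, ((l - 2⁻¹ ^ n : ℝ) : EReal) < ((⨍ y in S k, f y ∂μ : ℝ) : EReal) :=
      hc.eventually (eventually_gt_nhds hlc)
    have h2 : ∀ᶠ k in atTop, r k < 2⁻¹ ^ n := hr.eventually (eventually_lt_nhds hpos)
    obtain ⟨k, hk1, hk2⟩ := (h1.and h2).exists
    refine ⟨S k, ⟨Set.mem_iUnion.mpr ⟨x, hmem k⟩, by exact_mod_cast hk1.le,
      x, (hsub k).trans (ball_subset_ball hk2.le)⟩, B.mem_of_mem x _ (hmem k)⟩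
  · intro hx
    choose S hS hxS using hx
    have hmemx : ∀ n, S n ∈ B.sets x := fun n => by
      rw [hunc x]; exact ⟨(hS n).1, hxS n⟩
    have hsub : ∀ n, S n ⊆ Metric.ball x (2 * 2⁻¹ ^ n) := by
      intro n z hz
      obtain ⟨y, hy⟩ := (hS n).2.2
      have h1 : dist z y < 2⁻¹ ^ n := mem_ball.mp (hy hz)
      have h2 : dist x y < 2⁻¹ ^ n := mem_ball.mp (hy (hxS n))
      rw [mem_ball]
      calc dist z x ≤ dist z y + dist y x := dist_triangle z y x
        _ = dist z y + dist x y := by rw [dist_comm y x]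
        _ < 2⁻¹ ^ n + 2⁻¹ ^ n := by linarith
        _ = 2 * 2⁻¹ ^ n := by ring
    have hr : Tendsto (fun n : ℕ => 2 * (2⁻¹:ℝ) ^ n) atTop (𝓝 0) := by
      have h0 := tendsto_pow_atTop_nhds_zero_of_lt_one
        (by norm_num : (0:ℝ) ≤ 2⁻¹) (by norm_num : (2⁻¹:ℝ) < 1)
      simpa using h0.const_mul 2
    obtain ⟨c, -, φ, hφ, hc⟩ := IsCompact.tendsto_subseq isCompact_univ
      (fun n => Set.mem_univ ((⨍ y in S n, f y ∂μ : ℝ) : EReal))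
    have hcmem : c ∈ limitValues B.sets μ f x :=
      ⟨S ∘ φ, ⟨fun n => hmemx (φ n), fun n => 2 * (2⁻¹:ℝ) ^ (φ n),
        hr.comp hφ.tendsto_atTop, fun n => hsub (φ n)⟩, hc⟩
    have hlc : (l : EReal) ≤ c := by
      have hle : ∀ k : ℕ, ((l - 2⁻¹ ^ k : ℝ) : EReal) ≤
          ((⨍ y in S (φ k), f y ∂μ : ℝ) : EReal) := by
        intro k
        have h1 : l - 2⁻¹ ^ (φ k) ≤ ⨍ y in S (φ k), f y ∂μ := (hS (φ k)).2.1
        have h2 : (2⁻¹:ℝ) ^ (φ k) ≤ 2⁻¹ ^ k :=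
          pow_le_pow_of_le_one (by norm_num) (by norm_num) (hφ.id_le k)
        exact_mod_cast le_trans (by linarith) h1
      have htend : Tendsto (fun k : ℕ => ((l - 2⁻¹ ^ k : ℝ) : EReal)) atTop (𝓝 (l : EReal)) := by
        rw [EReal.tendsto_coe]
        have h0 := tendsto_pow_atTop_nhds_zero_of_lt_one
          (by norm_num : (0:ℝ) ≤ 2⁻¹) (by norm_num : (2⁻¹:ℝ) < 1)
        simpa using tendsto_const_nhds.sub h0
      exact le_of_tendsto_of_tendsto' htend hc hle
    exact le_trans hlc (le_sSup hcmem)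

private lemma meas_upper [OpensMeasurableSpace X] (B : DiffBasis μ) (hunc : B.Uncentered)
    (hsets : B.family.Countable ∨ ∀ S ∈ B.family, IsOpen S) (f : X → ℝ) :
    Measurable (upperDeriv B.sets μ f) := by
  have hIci : ∀ l : ℝ, MeasurableSet {x | (l : EReal) ≤ upperDeriv B.sets μ f x} := by
    intro l
    rw [key_eq B hunc f l]
    refine MeasurableSet.iInter fun n => ?_
    rcases hsets with hcnt | ho
    · refine MeasurableSet.biUnion (hcnt.mono fun S hS => hS.1) fun S hS => ?_
      obtain ⟨y, hy⟩ := Set.mem_iUnion.mp hS.1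
      exact B.measurableSet' y S hy
    · rw [← Set.sUnion_eq_biUnion]
      exact (isOpen_sUnion fun S hS => ho S hS.1).measurableSet
  apply measurable_of_Ici
  intro a
  induction a using EReal.rec with
  | bot => simp [Set.Ici_bot]
  | coe r => exact hIci r
  | top =>
    have heq : upperDeriv B.sets μ f ⁻¹' Set.Ici ⊤ =
        ⋂ n : ℕ, {x | ((n : ℝ) : EReal) ≤ upperDeriv B.sets μ f x} := by
      ext x
      simp only [Set.mem_preimage, Set.mem_Ici, top_le_iff, Set.mem_iInter, Set.mem_setOf_eq]
      constructor
      · intro h n; rw [h]; exact le_top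
      · intro h
        rw [EReal.eq_top_iff_forall_lt]
        intro y
        obtain ⟨n, hn⟩ := exists_nat_gt y
        exact lt_of_lt_of_le (by exact_mod_cast hn) (h n)
    rw [heq]
    exact MeasurableSet.iInter fun n => hIci n

end AuxLemmas

/-- **Theorem (statement 17).** Let `B` be an uncentered differentiation basis in a metric
measure space `𝕏` consisting of either countably many sets or arbitrarily many open sets, and
let `f ∈ L^p(𝕏)` for some `p ∈ [1,∞]`. Then the upper and lower derivatives `f̄` and `f̲` are
measurable; in fact, for every `λ ∈ ℝ`,
`{x : f̄(x) ≥ λ} = ⋂ₙ ⋃_{S ∈ B_{λ,n}} S`, where `B_{λ,n}` consists of all `S ∈ B` with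
`Avg_f(S) ≥ λ - 2⁻ⁿ` and `S ⊆ B(y, 2⁻ⁿ)` for some ball of radius `2⁻ⁿ`. -/
theorem statement17 {X : Type*} [MetricSpace X] [MeasurableSpace X] [OpensMeasurableSpace X]
    {μ : Measure X} (B : DiffBasis μ) (hunc : B.Uncentered)
    (hsets : B.family.Countable ∨ ∀ S ∈ B.family, IsOpen S)
    (p : ℝ≥0∞) (hp : 1 ≤ p) (f : X → ℝ) (hf : MemLp f p μ) :
    Measurable (upperDeriv B.sets μ f) ∧ Measurable (lowerDeriv B.sets μ f) ∧
      ∀ l : ℝ, {x | (l : EReal) ≤ upperDeriv B.sets μ f x} =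
        ⋂ n : ℕ, ⋃ S ∈ {S | S ∈ B.family ∧ l - 2⁻¹ ^ n ≤ ⨍ y in S, f y ∂μ ∧
          ∃ y : X, S ⊆ Metric.ball y (2⁻¹ ^ n)}, S := by
  refine ⟨meas_upper B hunc hsets f, ?_, key_eq B hunc f⟩
  rw [lowerDeriv_eq]
  exact continuous_neg.measurable.comp (meas_upper B hunc hsets fun y => -f y)
end

section
/- There exist a complete metric measure space 𝕏 = (X, ρ, μ) and an uncentered differentiation basis B in 𝕏 such that diff(B) = [1,∞); that is, B differentiates L^p(𝕏) for every p ∈ [1,∞) but B does not differentiate L^∞(𝕏). -/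
/-- A (Borel) metric measure space, bundled. -/
structure MetricMeasureSpace where
  X : Type
  [metricX : MetricSpace X]
  [measurableX : MeasurableSpace X]
  [borelLE : OpensMeasurableSpace X]
  nonemptyX : Nonempty X
  μ : MeasureTheory.Measure X

attribute [instance] MetricMeasureSpace.metricX MetricMeasureSpace.measurableX
  MetricMeasureSpace.borelLE MetricMeasureSpace.nonemptyX
open MeasureTheory Filter Metric Topology ENNReal

open scoped Classical

noncomputable section St18

noncomputable section St18

/-- the set of irrationals -/
def Irr : Set ℝ := {x | Irrational x}

lemma Irr_not_countable : ¬ Irr.Countable := by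
  intro h
  have : (Set.univ : Set ℝ).Countable := by
    have : (Set.univ : Set ℝ) ⊆ Irr ∪ Set.range ((↑) : ℚ → ℝ) := by
      intro x _
      by_cases hx : Irrational x
      · exact Or.inl hx
      · exact Or.inr (not_not.mp hx)
    exact Set.Countable.mono this (h.union (Set.countable_range _))
  exact Cardinal.not_countable_real this

/-- the "uncountability" measure on the irrationals: 0 on sets meeting `Irr` countably,
`∞` otherwise. -/
def μbase : Measure ℝ :=
  Measure.ofMeasurable (fun A _ => if (A ∩ Irr).Countable then (0:ℝ≥0∞) else ⊤)
    (by simp)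
    (by
      intro g _ _
      by_cases h : ∀ i, (g i ∩ Irr).Countable
      · have hU : ((⋃ i, g i) ∩ Irr).Countable := by
          rw [Set.iUnion_inter]
          exact Set.countable_iUnion h
        simp [hU, h]
      · push_neg at h
        obtain ⟨i, hi⟩ := h
        have hU : ¬ ((⋃ i, g i) ∩ Irr).Countable := by
          intro hc
          exact hi (hc.mono (Set.inter_subset_inter_left _ (Set.subset_iUnion g i)))
        show (if ((⋃ i, g i) ∩ Irr).Countable then (0:ℝ≥0∞) else ⊤) = _
        rw [if_neg hU]
        refine (top_le_iff.mp ?_).symm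
        calc (⊤ : ℝ≥0∞) = if (g i ∩ Irr).Countable then 0 else ⊤ := by rw [if_neg hi]
        _ ≤ _ := ENNReal.le_tsum i)

lemma μbase_apply {A : Set ℝ} (hA : MeasurableSet A) :
    μbase A = if (A ∩ Irr).Countable then (0:ℝ≥0∞) else ⊤ :=
  Measure.ofMeasurable_apply A hA

/-- point masses at the rationals -/
def μsat : Measure ℝ := Measure.sum (fun q : ℚ => Measure.dirac (q : ℝ))

lemma μsat_apply {A : Set ℝ} (hA : MeasurableSet A) :
    μsat A = ∑' q : ℚ, A.indicator 1 (q : ℝ) := by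
  rw [μsat, Measure.sum_apply _ hA]
  simp [Measure.dirac_apply' _ hA]

/-- the measure of the example -/
def μE : Measure ℝ := μbase + μsat

lemma μsat_single {A : Set ℝ} (hA : MeasurableSet A) (q : ℚ)
    (h : ∀ q' : ℚ, (q' : ℝ) ∈ A → q' = q) :
    μsat A = if (q : ℝ) ∈ A then (1:ℝ≥0∞) else 0 := by
  rw [μsat_apply hA]
  rw [tsum_eq_single q]
  · by_cases hq : (q : ℝ) ∈ A <;> simp [Set.indicator, hq]
  · intro q' hq'
    have : (q' : ℝ) ∉ A := fun hmem => hq' (h q' hmem)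
    simp [Set.indicator, this]

lemma μsat_infinite {A : Set ℝ} (hA : MeasurableSet A)
    (h : {q : ℚ | (q : ℝ) ∈ A}.Infinite) : μsat A = ⊤ := by
  rw [μsat_apply hA]
  have : (fun q : ℚ => A.indicator (1 : ℝ → ℝ≥0∞) (q : ℝ))
      = fun q : ℚ => {q : ℚ | (q : ℝ) ∈ A}.indicator (fun _ => (1:ℝ≥0∞)) q := by
    funext q
    by_cases hq : (q : ℝ) ∈ A <;> simp [Set.indicator, hq]
  rw [this, ← tsum_subtype]
  have := h.to_subtype
  exact ENNReal.tsum_const_eq_top_of_ne_zero one_ne_zero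


/-- the family of the differentiation basis: rational singletons and
pairs {irrational, rational}. -/
def Fam : Set (Set ℝ) :=
  {S | (∃ q : ℚ, S = {(q : ℝ)}) ∨ ∃ (x : ℝ) (q : ℚ), Irrational x ∧ S = {x, (q : ℝ)}}

def Bsets (x : ℝ) : Set (Set ℝ) := {S | S ∈ Fam ∧ x ∈ S}

lemma restrict_eq_dirac {S : Set ℝ} (hmS : MeasurableSet S) (hfin : S.Finite) (q : ℚ)
    (hq : (q : ℝ) ∈ S) (huniq : ∀ q' : ℚ, (q' : ℝ) ∈ S → q' = q) :
    μE.restrict S = Measure.dirac (q : ℝ) := by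
  ext A hA
  rw [Measure.restrict_apply hA]
  have hAS : MeasurableSet (A ∩ S) := hA.inter hmS
  have hb : μbase (A ∩ S) = 0 := by
    rw [μbase_apply hAS, if_pos]
    exact ((hfin.subset (Set.inter_subset_right)).subset Set.inter_subset_left).countable
  have hs : μsat (A ∩ S) = if (q : ℝ) ∈ A then (1:ℝ≥0∞) else 0 := by
    rw [μsat_single hAS q (fun q' hq' => huniq q' hq'.2)]
    by_cases hqA : (q : ℝ) ∈ A
    · rw [if_pos ⟨hqA, hq⟩, if_pos hqA]
    · rw [if_neg (fun h => hqA h.1), if_neg hqA]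
  show (μbase + μsat) (A ∩ S) = _
  rw [Measure.add_apply, hb, hs, zero_add, Measure.dirac_apply' _ hA]
  by_cases hqA : (q : ℝ) ∈ A <;> simp [Set.indicator, hqA]

/-- The canonical data of a family member. -/
lemma fam_core {S : Set ℝ} (hS : S ∈ Fam) :
    ∃ q : ℚ, (q : ℝ) ∈ S ∧ (∀ q' : ℚ, (q' : ℝ) ∈ S → q' = q) ∧ MeasurableSet S ∧
      μE.restrict S = Measure.dirac (q : ℝ) ∧ μE S = 1 := by
  have key : ∃ q : ℚ, (q : ℝ) ∈ S ∧ (∀ q' : ℚ, (q' : ℝ) ∈ S → q' = q) ∧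
      MeasurableSet S ∧ S.Finite := by
    rcases hS with ⟨q, rfl⟩ | ⟨x, q, hx, rfl⟩
    · exact ⟨q, rfl, fun q' hq' => Rat.cast_injective hq',
        measurableSet_singleton _, Set.finite_singleton _⟩
    · refine ⟨q, Set.mem_insert_iff.mpr (Or.inr rfl), ?_, ?_, (Set.finite_singleton _).insert x⟩
      · intro q' hq'
        rcases hq' with h | h
        · exact absurd ⟨q', h⟩ hx
        · exact Rat.cast_injective h
      · exact (Set.finite_singleton (q:ℝ)).insert x |>.measurableSet
  obtain ⟨q, hq, huniq, hmS, hfin⟩ := key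
  have hd := restrict_eq_dirac hmS hfin q hq huniq
  refine ⟨q, hq, huniq, hmS, hd, ?_⟩
  have : μE S = μE.restrict S Set.univ := by
    rw [Measure.restrict_apply MeasurableSet.univ, Set.univ_inter]
  rw [this, hd]
  simp

lemma avg_eq {S : Set ℝ} (c : ℝ) (h : μE.restrict S = Measure.dirac c) (f : ℝ → ℝ) :
    ⨍ y in S, f y ∂μE = f c := by
  show average (μE.restrict S) f = f c
  rw [h, average_eq_integral, integral_dirac]

lemma measure_ne_top_facts {A : Set ℝ} (h : μE A ≠ ⊤) :
    (A ∩ Irr).Countable ∧ {q : ℚ | (q : ℝ) ∈ A}.Finite := by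
  obtain ⟨B, hAB, hB, hBA⟩ := exists_measurable_superset μE A
  rw [← hBA] at h
  constructor
  · by_contra hc
    have hBc : ¬ (B ∩ Irr).Countable :=
      fun hcc => hc (hcc.mono (Set.inter_subset_inter_left _ hAB))
    have : μbase B = ⊤ := by rw [μbase_apply hB, if_neg hBc]
    exact h (top_le_iff.mp (this ▸ (Measure.le_add_right le_rfl : μbase ≤ μE) B))
  · by_contra hc
    have hBc : {q : ℚ | (q : ℝ) ∈ B}.Infinite := by
      exact Set.Infinite.mono (fun q hq => hAB hq) hc
    have : μsat B = ⊤ := μsat_infinite hB hBc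
    exact h (top_le_iff.mp (this ▸ (Measure.le_add_left le_rfl : μsat ≤ μE) B))

lemma measure_zero_of_countable_no_rat {A : Set ℝ} (hc : A.Countable)
    (hq : ∀ q : ℚ, (q : ℝ) ∉ A) : μE A = 0 := by
  have hA : MeasurableSet A := hc.measurableSet
  show (μbase + μsat) A = 0
  rw [Measure.add_apply, μbase_apply hA, if_pos (hc.mono Set.inter_subset_left),
    μsat_single hA 0 (fun q' hq' => absurd hq' (hq q')), if_neg (hq 0), add_zero]

lemma μE_complete : μE.IsComplete := by
  constructor
  intro A hA
  obtain ⟨B, hAB, hB, hBA⟩ := exists_measurable_superset μE A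
  rw [hA] at hBA
  have hb : (B ∩ Irr).Countable := by
    by_contra hc
    have : μbase B = ⊤ := by rw [μbase_apply hB, if_neg hc]
    have hle : μbase B ≤ μE B := (Measure.le_add_right le_rfl : μbase ≤ μE) B
    rw [this, hBA] at hle
    simp at hle
  have hBcount : B.Countable := by
    have : B ⊆ (B ∩ Irr) ∪ Set.range ((↑) : ℚ → ℝ) := by
      intro x hx
      by_cases hxi : Irrational x
      · exact Or.inl ⟨hx, hxi⟩
      · exact Or.inr (not_not.mp hxi)
    exact (hb.union (Set.countable_range _)).mono this
  exact ((hBcount.mono hAB).measurableSet)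

lemma irr_set_not_null {A : Set ℝ} (h : Irr ⊆ A) : μE A ≠ 0 := by
  intro h0
  have hne : μE A ≠ ⊤ := by rw [h0]; exact ENNReal.zero_ne_top
  obtain ⟨hcount, _⟩ := measure_ne_top_facts hne
  exact Irr_not_countable (hcount.mono (show Irr ⊆ _ ∩ Irr from fun x hx => ⟨h hx, hx⟩))

/-- extraction of L^p tail facts. -/
lemma memLp_facts {f : ℝ → ℝ} {p : ℝ≥0∞} (hp0 : p ≠ 0) (hpt : p ≠ ⊤)
    (hf : MemLp f p μE) :
    {x | Irrational x ∧ f x ≠ 0}.Countable ∧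
      ∀ ε : ℝ, 0 < ε → {q : ℚ | ε ≤ |f q|}.Finite := by
  have key : ∀ ε : ℝ, 0 < ε →
      ({x | ε ≤ |f x|} ∩ Irr).Countable ∧ {q : ℚ | ε ≤ |f q|}.Finite := by
    intro ε hε
    have hne : μE {x | ε.toNNReal ≤ ‖f x‖₊} < ⊤ :=
      hf.meas_ge_lt_top hp0 hpt (by simp [Real.toNNReal_eq_zero, not_le, hε])
    have hset : {x | ε.toNNReal ≤ ‖f x‖₊} = {x | ε ≤ |f x|} := by
      ext x
      rw [Set.mem_setOf_eq, Set.mem_setOf_eq, Real.toNNReal_le_iff_le_coe, coe_nnnorm,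
        Real.norm_eq_abs]
    rw [hset] at hne
    obtain ⟨h1, h2⟩ := measure_ne_top_facts hne.ne
    exact ⟨h1, h2.subset (fun q hq => hq)⟩
  constructor
  · have hsub : {x | Irrational x ∧ f x ≠ 0} ⊆
        ⋃ n : ℕ, ({x | (1:ℝ)/(n+1) ≤ |f x|} ∩ Irr) := by
      intro x ⟨hxi, hxf⟩
      have : 0 < |f x| := abs_pos.mpr hxf
      obtain ⟨n, hn⟩ := exists_nat_one_div_lt this
      exact Set.mem_iUnion.mpr ⟨n, hn.le, hxi⟩
    exact (Set.countable_iUnion (fun n =>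
      (key _ (by positivity)).1)).mono hsub
  · exact fun ε hε => (key ε hε).2

lemma avg_fam {S : Set ℝ} (hS : S ∈ Fam) (f : ℝ → ℝ) :
    ∃ q : ℚ, (q : ℝ) ∈ S ∧ (∀ q' : ℚ, (q' : ℝ) ∈ S → q' = q) ∧
      ⨍ y in S, f y ∂μE = f q := by
  obtain ⟨q, hq, huniq, _, hd, _⟩ := fam_core hS
  exact ⟨q, hq, huniq, avg_eq _ hd f⟩

lemma tendsto_irr {f : ℝ → ℝ} (hfq : ∀ ε : ℝ, 0 < ε → {q : ℚ | ε ≤ |f q|}.Finite)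
    {x : ℝ} (hx : Irrational x) (hfx : f x = 0) (S : ℕ → Set ℝ)
    (hS : ContractsTo Bsets x S) :
    Tendsto (fun n => ⨍ y in S n, f y ∂μE) atTop (𝓝 (f x)) := by
  obtain ⟨hmem, r, hr, hsub⟩ := hS
  have H : ∀ n, ∃ q : ℚ, (q : ℝ) ∈ S n ∧ ⨍ y in S n, f y ∂μE = f q := by
    intro n
    obtain ⟨q, hq, _, havg⟩ := avg_fam (hmem n).1 f
    exact ⟨q, hq, havg⟩
  choose q hqmem hqavg using H
  have hfun : (fun n => ⨍ y in S n, f y ∂μE) = fun n => f (q n) := funext hqavg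
  rw [hfun, hfx]
  rw [Metric.tendsto_atTop]
  intro ε hε
  have hF : (((↑) : ℚ → ℝ) '' {q' : ℚ | ε ≤ |f q'|}).Finite := (hfq ε hε).image _
  have hxF : x ∈ ((((↑) : ℚ → ℝ) '' {q' : ℚ | ε ≤ |f q'|})ᶜ : Set ℝ) := by
    intro hmemF
    obtain ⟨q', _, hq'⟩ := hmemF
    exact hx ⟨q', hq'⟩
  obtain ⟨δ, hδ, hball⟩ := Metric.isOpen_iff.mp hF.isClosed.isOpen_compl x hxF
  have hev : ∀ᶠ n in atTop, r n < δ := hr.eventually (gt_mem_nhds hδ)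
  rw [eventually_atTop] at hev
  obtain ⟨N, hN⟩ := hev
  refine ⟨N, fun n hn => ?_⟩
  have hqball : ((q n : ℝ)) ∈ Metric.ball x δ := by
    have := hsub n (hqmem n)
    rw [Metric.mem_ball] at this ⊢
    exact this.trans (hN n hn)
  have hnotF : (q n : ℝ) ∉ ((↑) : ℚ → ℝ) '' {q' : ℚ | ε ≤ |f q'|} := hball hqball
  have : ¬ ε ≤ |f (q n)| := fun hle => hnotF ⟨q n, hle, rfl⟩
  rw [Real.dist_eq, sub_zero]
  exact lt_of_not_ge this

lemma tendsto_rat (f : ℝ → ℝ) (q0 : ℚ) (S : ℕ → Set ℝ)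
    (hS : ContractsTo Bsets ((q0 : ℝ)) S) :
    Tendsto (fun n => ⨍ y in S n, f y ∂μE) atTop (𝓝 (f q0)) := by
  obtain ⟨hmem, _, _, _⟩ := hS
  have hfun : (fun n => ⨍ y in S n, f y ∂μE) = fun _ => f q0 := by
    funext n
    obtain ⟨q, _, huniq, havg⟩ := avg_fam (hmem n).1 f
    rw [havg, huniq q0 (hmem n).2]
  rw [hfun]
  exact tendsto_const_nhds

lemma contracts_rat (q : ℚ) : ContractsTo Bsets ((q : ℝ)) (fun _ => {(q : ℝ)}) := by
  refine ⟨fun n => ⟨Or.inl ⟨q, rfl⟩, rfl⟩, fun n => 1 / (n + 1), 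
    tendsto_one_div_add_atTop_nhds_zero_nat, fun n y hy => ?_⟩
  rw [Set.mem_singleton_iff] at hy
  subst hy
  rw [Metric.mem_ball, dist_self]
  positivity

lemma contracts_irr {x : ℝ} (hx : Irrational x) :
    ∃ q : ℕ → ℚ, ContractsTo Bsets x (fun n => {x, ((q n : ℝ))}) := by
  have H : ∀ n : ℕ, ∃ q : ℚ, x < (q : ℝ) ∧ (q : ℝ) < x + 1 / (n + 1) := by
    intro n
    refine exists_rat_btwn ?_
    have h1 : (0:ℝ) < 1 / (n + 1) := by positivity
    linarith
  choose q hq1 hq2 using H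
  refine ⟨q, fun n => ⟨Or.inr ⟨x, q n, hx, rfl⟩, Or.inl rfl⟩,
    fun n => 2 * (1 / (n + 1)), ?_, fun n y hy => ?_⟩
  · have := tendsto_one_div_add_atTop_nhds_zero_nat.const_mul (2 : ℝ)
    simpa using this
  · have hpos : (0 : ℝ) < 1 / (n + 1) := by positivity
    rcases hy with rfl | hy
    · rw [Metric.mem_ball, dist_self]
      positivity
    · rw [Set.mem_singleton_iff] at hy
      subst hy
      rw [Metric.mem_ball, Real.dist_eq, abs_sub_lt_iff]
      constructor
      · have := hq2 n
        linarith
      · have := hq1 n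
        linarith

lemma avg_pair {x : ℝ} (hx : Irrational x) (q : ℚ) (f : ℝ → ℝ) :
    ⨍ y in ({x, (q : ℝ)} : Set ℝ), f y ∂μE = f q := by
  obtain ⟨q', _, huniq, havg⟩ := avg_fam (Or.inr ⟨x, q, hx, rfl⟩) f
  rw [havg, huniq q (Or.inr rfl)]

/-- The differentiation basis of the example. -/
def BE : DiffBasis μE where
  sets := Bsets
  measurableSet' := by
    intro x S hS
    obtain ⟨_, _, _, hm, _, _⟩ := fam_core hS.1
    exact hm
  mem_of_mem := fun x S hS => hS.2
  measure_pos := by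
    intro x S hS
    obtain ⟨_, _, _, _, _, hμ⟩ := fam_core hS.1
    rw [hμ]
    exact zero_lt_one
  measure_lt_top := by
    intro x S hS
    obtain ⟨_, _, _, _, _, hμ⟩ := fam_core hS.1
    rw [hμ]
    exact one_lt_top
  ae_contracts := by
    refine ae_of_all _ (fun x => ?_)
    by_cases hx : Irrational x
    · obtain ⟨q, hq⟩ := contracts_irr hx
      exact ⟨_, hq⟩
    · obtain ⟨q, rfl⟩ := not_not.mp hx
      exact ⟨_, contracts_rat q⟩

lemma BE_family : BE.family = Fam := by
  ext S
  simp only [DiffBasis.family, Set.mem_iUnion]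
  constructor
  · rintro ⟨x, hS, -⟩
    exact hS
  · intro hS
    obtain ⟨q, hq, -⟩ := fam_core hS
    exact ⟨q, hS, hq⟩

lemma BE_uncentered : BE.Uncentered := by
  intro x
  ext S
  rw [Set.mem_setOf_eq, BE_family]
  exact Iff.rfl

lemma BE_differentiates {p : ℝ≥0∞} (hp0 : p ≠ 0) (hpt : p ≠ ⊤) : BE.Differentiates p := by
  intro f hf
  obtain ⟨hcount, hfin⟩ := memLp_facts hp0 hpt hf
  rw [ae_iff]
  have hnull : μE {x | Irrational x ∧ f x ≠ 0} = 0 :=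
    measure_zero_of_countable_no_rat hcount (fun q hq => Rat.not_irrational q hq.1)
  refine measure_mono_null (fun x hx => ?_) hnull
  rw [Set.mem_setOf_eq] at hx ⊢
  by_contra hcon
  rw [not_and_or, not_not] at hcon
  apply hx
  rcases hcon with hrat | hfx
  · obtain ⟨q, rfl⟩ := not_not.mp hrat
    exact fun S hS => tendsto_rat f q S hS
  · by_cases hxi : Irrational x
    · exact fun S hS => tendsto_irr hfin hxi hfx S hS
    · obtain ⟨q, rfl⟩ := not_not.mp hxi
      exact fun S hS => tendsto_rat f q S hS

lemma BE_not_top : ¬ BE.Differentiates ⊤ := by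
  intro h
  set f : ℝ → ℝ := fun x => if Irrational x then (1 : ℝ) else 0 with hfdef
  have hIrrMeas : MeasurableSet Irr := by
    have : Irr = (Set.range ((↑) : ℚ → ℝ))ᶜ := rfl
    rw [this]
    exact ((Set.countable_range _).measurableSet).compl
  have hmf : MemLp f ⊤ μE := by
    refine memLp_top_of_bound ((Measurable.ite hIrrMeas measurable_const
      measurable_const).aestronglyMeasurable) 1 (ae_of_all _ fun x => ?_)
    by_cases hx : Irrational x <;> simp [hfdef, hx]
  have hae := h f hmf
  rw [ae_iff] at hae
  refine irr_set_not_null (fun x hxI => ?_) hae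
  rw [Set.mem_setOf_eq]
  intro hP
  obtain ⟨q, hq⟩ := contracts_irr hxI
  have ht := hP _ hq
  have havg : (fun n => ⨍ y in ({x, ((q n : ℝ))} : Set ℝ), f y ∂μE) = fun _ => (0 : ℝ) := by
    funext n
    rw [avg_pair hxI (q n) f]
    simp [hfdef, Rat.not_irrational]
  rw [havg] at ht
  have hlim : f x = 0 := tendsto_nhds_unique tendsto_const_nhds ht |>.symm
  have hxI' : Irrational x := hxI
  rw [hfdef] at hlim
  simp only [if_pos hxI'] at hlim
  norm_num at hlim

lemma BE_diffSet : BE.diffSet = Set.Ico 1 ⊤ := by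
  ext p
  simp only [DiffBasis.diffSet, Set.mem_setOf_eq, Set.mem_Ico]
  constructor
  · rintro ⟨h1, hd⟩
    exact ⟨h1, lt_top_iff_ne_top.mpr fun hp => BE_not_top (hp ▸ hd)⟩
  · rintro ⟨h1, h2⟩
    exact ⟨h1, BE_differentiates ((lt_of_lt_of_le (by norm_num : (0:ℝ≥0∞) < 1) h1).ne') h2.ne⟩

/-- **Theorem (statement 18, Example E1).** There exist a complete metric measure space `𝕏`
and an uncentered differentiation basis `B` in `𝕏` such that `diff(B) = [1,∞)`: `B`
differentiates `L^p(𝕏)` for every `p ∈ [1,∞)` but not `L^∞(𝕏)`. -/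
theorem statement18 :
    ∃ 𝕏 : MetricMeasureSpace, 𝕏.μ.IsComplete ∧
      ∃ B : DiffBasis 𝕏.μ, B.Uncentered ∧ B.diffSet = Set.Ico 1 ⊤ :=
  ⟨{ X := ℝ, nonemptyX := ⟨0⟩, μ := μE }, μE_complete, BE, BE_uncentered, BE_diffSet⟩

end St18
end St18
end
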